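/- arXiv:1005.0810 — 7 statements merged into one kernel-verified Lean document; each statement's English description precedes it below -/
import Mathlib

section
/- For all real numbers σ, η with 0 ≤ η ≤ σ and σ > 0, and all x ≥ 0, one has σx/(1+σx) − ηx/(1+ηx) ≤ (σ−η)/(√σ+√η)². -/
/-- For all real numbers `σ, η` with `0 ≤ η ≤ σ` and `σ > 0`, and all
`x ≥ 0`, one has `σx/(1+σx) − ηx/(1+ηx) ≤ (σ−η)/(√σ+√η)²`. -/
theorem sigma_eta_inequality (σ η x : ℝ) (hη : 0 ≤ η) (hησ : η ≤ σ) (hσ : 0 < σ)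
    (hx : 0 ≤ x) :
    σ * x / (1 + σ * x) - η * x / (1 + η * x) ≤
      (σ - η) / (Real.sqrt σ + Real.sqrt η) ^ 2 := by
  set s := Real.sqrt σ with hs
  set t := Real.sqrt η with ht
  have hs0 : 0 < s := Real.sqrt_pos.mpr hσ
  have ht0 : 0 ≤ t := Real.sqrt_nonneg η
  have hs2 : s ^ 2 = σ := Real.sq_sqrt hσ.le
  have ht2 : t ^ 2 = η := Real.sq_sqrt hη
  have hd1 : 0 < 1 + σ * x := by positivity
  have hd2 : 0 < 1 + η * x := by positivity
  have hst : 0 < (s + t) ^ 2 := by positivity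
  have heq : σ * x / (1 + σ * x) - η * x / (1 + η * x)
      = (σ - η) * x / ((1 + σ * x) * (1 + η * x)) := by
    field_simp; ring
  rw [heq, div_le_div_iff₀ (by positivity) hst, ← hs2, ← ht2]
  have key : x * (s + t) ^ 2 ≤ (1 + s ^ 2 * x) * (1 + t ^ 2 * x) := by
    nlinarith [sq_nonneg (1 - s * t * x)]
  have hst' : 0 ≤ s ^ 2 - t ^ 2 := by rw [hs2, ht2]; linarith
  nlinarith [mul_le_mul_of_nonneg_left key hst']
end

section
/- Let U be a real symmetric n×n matrix all of whose eigenvalues are at most λ₀, where λ₀ < 0, and let D be a real diagonal n×n matrix all of whose diagonal entries are at least 1. Then every eigenvalue of the matrix DU is real and at most λ₀. -/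
open Matrix Complex Finset
open scoped ComplexOrder

/-- Let `U` be a real symmetric `n×n` matrix all of whose eigenvalues
are at most `λ₀ < 0`, and let `D` be a real diagonal `n×n` matrix all of whose
diagonal entries are at least `1`. Then every eigenvalue of `DU` is real and at
most `λ₀`. -/
theorem eigenvalues_of_DU_le
    (n : ℕ) (U D : Matrix (Fin n) (Fin n) ℝ) (lam0 : ℝ) (hlam0 : lam0 < 0)
    (hU_symm : U.IsSymm)
    (hU_eig : ∀ μ : ℝ, μ ∈ spectrum ℝ U → μ ≤ lam0)
    (hD_diag : ∀ i j : Fin n, i ≠ j → D i j = 0)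
    (hD_ge : ∀ i : Fin n, 1 ≤ D i i) :
    ∀ μ : ℂ, μ ∈ spectrum ℂ ((D * U).map (algebraMap ℝ ℂ)) →
      μ.im = 0 ∧ μ.re ≤ lam0 := by
  classical
  intro μ hμ
  set f : ℝ →+* ℂ := algebraMap ℝ ℂ with hf
  -- U is Hermitian over ℝ
  have hU_herm : U.IsHermitian := by
    have : Uᴴ = Uᵀ := by ext i j; simp [conjTranspose_apply]
    rw [Matrix.IsHermitian, this]; exact hU_symm
  -- N := lam0 • 1 - U is Hermitian with nonnegative eigenvalues
  set N : Matrix (Fin n) (Fin n) ℝ := lam0 • (1 : Matrix (Fin n) (Fin n) ℝ) - U with hN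
  have hN_herm : N.IsHermitian := by
    have h1 : (lam0 • (1 : Matrix (Fin n) (Fin n) ℝ)).IsHermitian := by
      rw [Matrix.IsHermitian]
      ext i j
      simp [conjTranspose_apply, Matrix.one_apply, eq_comm]
    exact h1.sub hU_herm
  have hN_eig : ∀ i, 0 ≤ hN_herm.eigenvalues i := by
    intro i
    have hmem := hN_herm.eigenvalues_mem_spectrum_real i
    set ν := hN_herm.eigenvalues i with hν
    have hsub : lam0 - ν ∈ spectrum ℝ U := by
      rw [spectrum.mem_iff] at hmem ⊢
      intro h
      apply hmem
      have key : algebraMap ℝ (Matrix (Fin n) (Fin n) ℝ) ν - N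
          = -(algebraMap ℝ (Matrix (Fin n) (Fin n) ℝ) (lam0 - ν) - U) := by
        simp only [Algebra.algebraMap_eq_smul_one, hN, sub_smul]
        abel
      rw [key]
      exact h.neg
    have := hU_eig _ hsub
    linarith
  -- N is positive semidefinite, hence N = Bᵀ B
  have hN_ps : N.PosSemidef := hN_herm.posSemidef_iff_eigenvalues_nonneg.mpr hN_eig
  obtain ⟨B, hB⟩ : ∃ B : Matrix (Fin n) (Fin n) ℝ, N = Bᴴ * B := by
    open scoped MatrixOrder in
    obtain ⟨B, hB⟩ := CStarAlgebra.nonneg_iff_eq_star_mul_self.mp hN_ps.nonneg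
    exact ⟨B, by rw [hB, star_eq_conjTranspose]⟩
  -- complexification of N is positive semidefinite
  have hNc_ps : (N.map f).PosSemidef := by
    have : N.map f = (B.map f)ᴴ * (B.map f) := by
      rw [hB, Matrix.map_mul]
      congr 1
      exact Matrix.conjTranspose_map f (fun a => by simp [hf])
    rw [this]
    exact Matrix.posSemidef_conjTranspose_mul_self _
  -- get an eigenvector for μ
  have hμ' : μ ∈ spectrum ℂ (Matrix.toLinAlgEquiv' ((D * U).map f)) := by
    rwa [AlgEquiv.spectrum_eq]
  have hev := (Module.End.hasEigenvalue_iff_mem_spectrum.mpr hμ').exists_hasEigenvector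
  obtain ⟨v, hv⟩ := hev
  have hv0 : v ≠ 0 := hv.2
  have hmv : ((D * U).map f) *ᵥ v = μ • v := by
    have := hv.apply_eq_smul
    rwa [Matrix.toLinAlgEquiv'_apply] at this
  set w : Fin n → ℂ := (U.map f) *ᵥ v with hw
  -- componentwise eigen-equation
  have hcomp : ∀ i, (D i i : ℂ) * w i = μ * v i := by
    intro i
    have h1 : ((D * U).map f) *ᵥ v = (D.map f) *ᵥ w := by
      rw [Matrix.map_mul, hw, Matrix.mulVec_mulVec]
    have h2 := congrFun (h1.symm.trans hmv) i
    have h3 : ((D.map f) *ᵥ w) i = (D i i : ℂ) * w i := by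
      rw [Matrix.mulVec, dotProduct]
      refine Finset.sum_eq_single i (fun j _ hji => ?_) (by simp)
      simp [Matrix.map_apply, hD_diag i j (Ne.symm hji), hf]
    rw [h3] at h2
    simpa using h2
  -- real quantities
  set S : ℝ := ∑ i, Complex.normSq (v i) / D i i with hS
  set T : ℝ := ∑ i, Complex.normSq (v i) with hT
  obtain ⟨i₀, hi₀⟩ : ∃ i, v i ≠ 0 := by
    by_contra h
    push_neg at h
    exact hv0 (funext h)
  have hDpos : ∀ i, (0:ℝ) < D i i := fun i => lt_of_lt_of_le one_pos (hD_ge i)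
  have hSpos : 0 < S := by
    refine Finset.sum_pos' (fun i _ => div_nonneg (Complex.normSq_nonneg _) (hDpos i).le)
      ⟨i₀, Finset.mem_univ _, div_pos (Complex.normSq_pos.mpr hi₀) (hDpos i₀)⟩
  have hST : S ≤ T := by
    refine Finset.sum_le_sum fun i _ => div_le_self (Complex.normSq_nonneg _) (hD_ge i)
  -- the quadratic form identity: star v ⬝ᵥ w = μ * S
  have hq : star v ⬝ᵥ w = μ * (S : ℂ) := by
    rw [dotProduct, hS]
    push_cast
    rw [Finset.mul_sum]
    refine Finset.sum_congr rfl fun i _ => ?_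
    have hd : (D i i : ℂ) ≠ 0 := by
      exact_mod_cast (hDpos i).ne'
    have hnorm : star (v i) * v i = (Complex.normSq (v i) : ℂ) := by
      simpa using (Complex.normSq_eq_conj_mul_self (z := v i)).symm
    rw [Pi.star_apply, mul_div_assoc', eq_div_iff hd]
    calc star (v i) * w i * (D i i : ℂ)
        = star (v i) * ((D i i : ℂ) * w i) := by ring
      _ = star (v i) * (μ * v i) := by rw [hcomp i]
      _ = μ * (star (v i) * v i) := by ring
      _ = μ * (Complex.normSq (v i) : ℂ) := by rw [hnorm]
  have hvv : star v ⬝ᵥ v = (T : ℂ) := by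
    rw [dotProduct, hT]
    push_cast
    refine Finset.sum_congr rfl fun i _ => ?_
    simp [Pi.star_apply, Complex.normSq_eq_conj_mul_self]
  -- apply positive semidefiniteness
  have hNc_eq : N.map f = (lam0 : ℂ) • (1 : Matrix (Fin n) (Fin n) ℂ) - U.map f := by
    ext i j
    simp [hN, Matrix.map_apply, Matrix.one_apply, Matrix.sub_apply, Matrix.smul_apply, hf,
      apply_ite]
  have hpos := hNc_ps.dotProduct_mulVec_nonneg v
  have hform : star v ⬝ᵥ ((N.map f) *ᵥ v) = (lam0 : ℂ) * (T : ℂ) - μ * (S : ℂ) := by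
    rw [hNc_eq, Matrix.sub_mulVec, Matrix.smul_mulVec, Matrix.one_mulVec,
      dotProduct_sub, dotProduct_smul, ← hw, hq, smul_eq_mul, hvv]
  rw [hform, Complex.le_def] at hpos
  obtain ⟨hre, him⟩ := hpos
  simp only [Complex.sub_im, Complex.mul_im, Complex.ofReal_re, Complex.ofReal_im,
    Complex.zero_im, Complex.sub_re, Complex.mul_re, Complex.zero_re] at hre him
  -- conclude
  have him0 : μ.im = 0 := by
    have : μ.im * S = 0 := by linarith [him]
    rcases mul_eq_zero.mp this with h | h
    · exact h
    · exact absurd h hSpos.ne'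
  refine ⟨him0, ?_⟩
  have h1 : μ.re * S ≤ lam0 * T := by nlinarith [him0]
  have h2 : lam0 * T ≤ lam0 * S := by nlinarith
  have := h1.trans h2
  exact le_of_mul_le_mul_right (by linarith) hSpos
end

section
/- Let n ≥ 1, let λ > 0, σ > 0, and let w₁, …, wₙ be positive real numbers. For each i define sᵢ = 1/(1+σwᵢ), aᵢ = 1 + (λ wᵢ/n)·Σ_{j=1}^n w_j, fᵢ(s) = 1/aᵢ + Σ_{j=1}^n (λ wᵢ w_j/(aᵢ n)) sᵢ s_j, and uᵢ = aᵢ(fᵢ(s) − sᵢ). Then for every i, uᵢ = (σwᵢ/(1+σwᵢ))·(1 − (λ/n)·Σ_{j=1}^n w_j²/(1+σw_j)). In particular, if σ satisfies (λ/n)·Σ_{j=1}^n w_j²/(1+σw_j) = 1, then uᵢ = 0 for all i. -/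
open Finset

/-- Let `n ≥ 1`, `λ > 0`, `σ > 0`, and let `w₁, …, wₙ` be positive
reals. With `sᵢ = 1/(1+σwᵢ)`, `aᵢ = 1 + (λwᵢ/n)·Σⱼ wⱼ`,
`fᵢ(s) = 1/aᵢ + Σⱼ (λwᵢwⱼ/(aᵢn)) sᵢ sⱼ`, and `uᵢ = aᵢ(fᵢ(s) − sᵢ)`, one has
`uᵢ = (σwᵢ/(1+σwᵢ))·(1 − (λ/n)·Σⱼ wⱼ²/(1+σwⱼ))` for every `i`; in particular, if
`(λ/n)·Σⱼ wⱼ²/(1+σwⱼ) = 1` then `uᵢ = 0` for all `i`. -/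
theorem extinction_probability_equation
    (n : ℕ) (hn : 1 ≤ n) (lam σ : ℝ) (hlam : 0 < lam) (hσ : 0 < σ)
    (w : Fin n → ℝ) (hw : ∀ i, 0 < w i)
    (s a u : Fin n → ℝ) (f : Fin n → (Fin n → ℝ) → ℝ)
    (hs : ∀ i, s i = 1 / (1 + σ * w i))
    (ha : ∀ i, a i = 1 + lam * w i / n * ∑ j, w j)
    (hf : ∀ i (t : Fin n → ℝ),
      f i t = 1 / a i + ∑ j, lam * w i * w j / (a i * n) * t i * t j)
    (hu : ∀ i, u i = a i * (f i s - s i)) :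
    (∀ i, u i =
        σ * w i / (1 + σ * w i) * (1 - lam / n * ∑ j, (w j) ^ 2 / (1 + σ * w j))) ∧
    (lam / n * ∑ j, (w j) ^ 2 / (1 + σ * w j) = 1 → ∀ i, u i = 0) := by
  have hn0 : (0:ℝ) < n := by exact_mod_cast hn
  have hD : ∀ j, (0:ℝ) < 1 + σ * w j := fun j => by nlinarith [hw j, mul_pos hσ (hw j)]
  have key : ∀ i, u i =
      σ * w i / (1 + σ * w i) * (1 - lam / n * ∑ j, (w j) ^ 2 / (1 + σ * w j)) := by
    intro i
    have hsum : (0:ℝ) ≤ ∑ j, w j := Finset.sum_nonneg fun j _ => (hw j).le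
    have hai : (0:ℝ) < a i := by
      rw [ha]
      have h1 : 0 ≤ lam * w i / n * ∑ j, w j :=
        mul_nonneg (div_nonneg (mul_nonneg hlam.le (hw i).le) hn0.le) hsum
      linarith
    have hterm : ∀ j ∈ (univ : Finset (Fin n)),
        a i * (lam * w i * w j / (a i * n) * s i * s j) =
          (lam * w i / n * s i) * w j
            - (σ * w i / (1 + σ * w i) * (lam / n)) * ((w j) ^ 2 / (1 + σ * w j)) := by
      intro j _
      rw [hs i, hs j]
      field_simp [hai.ne', (hD i).ne', (hD j).ne', hn0.ne']
      have h1 : 1 + w i * σ ≠ 0 := by rw [mul_comm]; exact (hD i).ne'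
      have h2 : 1 + w j * σ ≠ 0 := by rw [mul_comm]; exact (hD j).ne'
      field_simp
      ring
    rw [hu, hf, mul_sub, mul_add, mul_one_div, div_self hai.ne', Finset.mul_sum,
      Finset.sum_congr rfl hterm, Finset.sum_sub_distrib, ← Finset.mul_sum,
      ← Finset.mul_sum, ha, hs]
    field_simp [(hD i).ne', hn0.ne']
    have h1 : 1 + w i * σ ≠ 0 := by rw [mul_comm]; exact (hD i).ne'
    field_simp
    ring
  exact ⟨key, fun h i => by rw [key i, h]; ring⟩
end

section
/- Let w be a nonnegative real random variable and let C > 0 and α ∈ (2,3) be such that lim_{x→∞} x^{α−1} P(w > x) = C. Then lim_{σ→0⁺} σ^{3−α} E[w²/(1+σw)] = C(α−1)π/sin(πα). -/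
open MeasureTheory Filter Real
open scoped Topology

section AuxiliaryLemmas

open Set

lemma real_beta_eval {s : ℝ} (h0 : 0 < s) (h1 : s < 1) :
    ∫ x in (0:ℝ)..1, x ^ (s-1) * (1-x) ^ (-s) = π / Real.sin (π * s) := by
  have hs1 : s - 1 ≠ 0 := by linarith
  have hsc : (s : ℂ) - 1 ≠ 0 := by
    intro hc
    have h' : (s : ℂ) = 1 := sub_eq_zero.mp hc
    have h'' : s = 1 := by exact_mod_cast h'
    exact hs1 (by linarith)
  have hbeta : Complex.betaIntegral s ((1 - s : ℝ) : ℂ) = ((π / Real.sin (π * s) : ℝ) : ℂ) := by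
    have h := Complex.Gamma_mul_Gamma_eq_betaIntegral
      (s := (s : ℂ)) (t := ((1 - s : ℝ) : ℂ)) (by simpa using h0) (by simp; linarith)
    rw [show (s : ℂ) + ((1 - s : ℝ) : ℂ) = 1 by push_cast; ring, Complex.Gamma_one, one_mul] at h
    rw [Complex.Gamma_ofReal, Complex.Gamma_ofReal, ← Complex.ofReal_mul,
      Real.Gamma_mul_Gamma_one_sub] at h
    exact h.symm
  have heq : Complex.betaIntegral s ((1 - s : ℝ) : ℂ)
      = ((∫ x in (0:ℝ)..1, x ^ (s-1) * (1-x) ^ (-s) : ℝ) : ℂ) := by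
    rw [Complex.betaIntegral, ← intervalIntegral.integral_ofReal]
    apply intervalIntegral.integral_congr
    intro x hx
    rw [uIcc_of_le (by norm_num : (0:ℝ) ≤ 1)] at hx
    obtain ⟨hx0, hx1⟩ := hx
    have e1 : (x : ℂ) ^ ((s : ℂ) - 1) = ((x ^ (s-1) : ℝ) : ℂ) := by
      rcases eq_or_lt_of_le hx0 with h | h
      · rw [← h]
        simp only [Complex.ofReal_zero]
        rw [Complex.zero_cpow hsc, Real.zero_rpow hs1]
        simp
      · rw [Complex.ofReal_cpow (le_of_lt h)]
        push_cast
        ring_nf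
    have e2 : ((1:ℂ) - x) ^ (((1 - s : ℝ) : ℂ) - 1) = (((1-x) ^ (-s) : ℝ) : ℂ) := by
      have h1x : (0:ℝ) ≤ 1 - x := by linarith
      rw [show (((1 - s : ℝ) : ℂ) - 1) = ((-s : ℝ) : ℂ) by push_cast; ring,
        show ((1:ℂ) - x) = ((1 - x : ℝ) : ℂ) by push_cast; ring,
        Complex.ofReal_cpow h1x]
    simp only [e1, e2, ← Complex.ofReal_mul]
  rw [heq] at hbeta
  exact_mod_cast hbeta

lemma integral_rpow_div_one_add {s : ℝ} (h0 : 0 < s) (h1 : s < 1) :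
    ∫ x in Ioi (0:ℝ), x ^ (s-1) / (1+x) = π / Real.sin (π * s) := by
  set φ : ℝ → ℝ := fun u => u / (1-u) with hφ
  set φ' : ℝ → ℝ := fun u => ((1-u)^2)⁻¹ with hφ'
  have himg : φ '' Ioo 0 1 = Ioi 0 := by
    ext y
    constructor
    · rintro ⟨u, ⟨hu0, hu1⟩, rfl⟩
      exact div_pos hu0 (by linarith)
    · intro hy
      rw [mem_Ioi] at hy
      refine ⟨y / (1+y), ⟨div_pos hy (by linarith), ?_⟩, ?_⟩
      · rw [div_lt_one (by linarith)]; linarith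
      · have h1y : (1:ℝ) + y ≠ 0 := by positivity
        simp only [hφ]
        rw [show 1 - y/(1+y) = 1/(1+y) by field_simp; ring]
        field_simp
  have hderiv : ∀ u ∈ Ioo (0:ℝ) 1, HasDerivWithinAt φ (φ' u) (Ioo 0 1) u := by
    intro u ⟨hu0, hu1⟩
    have hne : 1 - u ≠ 0 := by intro h; linarith
    have h1 : HasDerivAt φ ((1 * (1-u) - u * (-1)) / (1-u)^2) u :=
      (hasDerivAt_id u).div ((hasDerivAt_id u).const_sub 1) hne
    have : (1 * (1-u) - u * (-1)) / (1-u)^2 = φ' u := by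
      simp only [hφ']; field_simp; ring
    exact (this ▸ h1).hasDerivWithinAt
  have hinj : InjOn φ (Ioo 0 1) := by
    intro a ⟨ha0, ha1⟩ b ⟨hb0, hb1⟩ hab
    have hna : 1 - a ≠ 0 := by intro h; linarith
    have hnb : 1 - b ≠ 0 := by intro h; linarith
    simp only [hφ] at hab
    rw [div_eq_div_iff hna hnb] at hab
    linarith
  have key := integral_image_eq_integral_abs_deriv_smul measurableSet_Ioo hderiv hinj
    (fun x => x ^ (s-1) / (1+x))
  rw [himg] at key
  rw [key]
  have hcongr : ∀ u ∈ Ioo (0:ℝ) 1,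
      |φ' u| • (φ u ^ (s-1) / (1 + φ u)) = u ^ (s-1) * (1-u) ^ (-s) := by
    intro u ⟨hu0, hu1⟩
    have hv : (0:ℝ) < 1 - u := by linarith
    have hvne : (1:ℝ) - u ≠ 0 := ne_of_gt hv
    have e1 : φ u ^ (s-1) = u ^ (s-1) * ((1-u) ^ (s-1))⁻¹ := by
      rw [hφ]
      simp only
      rw [Real.div_rpow hu0.le hv.le, div_eq_mul_inv]
    have e2 : 1 + φ u = (1-u)⁻¹ := by
      simp only [hφ]
      field_simp; ring
    have e3' : (1-u) ^ (s-1) * (1-u) = (1-u) ^ s := by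
      have h := Real.rpow_add hv (s-1) 1
      rw [Real.rpow_one] at h
      rw [← h]; norm_num
    have e3 : (1-u) ^ (-s) = ((1-u) ^ (s-1) * (1-u))⁻¹ := by
      rw [e3', Real.rpow_neg hv.le]
    have hApos : (0:ℝ) < (1-u) ^ (s-1) := Real.rpow_pos_of_pos hv _
    rw [e1, e2, e3, hφ', smul_eq_mul]
    rw [abs_of_pos (by positivity)]
    field_simp
  rw [setIntegral_congr_fun measurableSet_Ioo hcongr, ← integral_Ioc_eq_integral_Ioo,
    ← intervalIntegral.integral_of_le (by norm_num : (0:ℝ) ≤ 1)]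
  exact real_beta_eval h0 h1

lemma integrableOn_Ioi_of_bounds {f : ℝ → ℝ}
    (hm : AEStronglyMeasurable f (volume.restrict (Ioi 0))) {β γ c : ℝ}
    (hβ : -1 < β) (hγ : γ < -1)
    (h1 : ∀ u ∈ Ioc (0:ℝ) 1, ‖f u‖ ≤ c * u ^ β)
    (h2 : ∀ u ∈ Ioi (1:ℝ), ‖f u‖ ≤ c * u ^ γ) :
    IntegrableOn f (Ioi 0) := by
  have hun : Ioc (0:ℝ) 1 ∪ Ioi 1 = Ioi 0 := Ioc_union_Ioi_eq_Ioi zero_le_one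
  rw [← hun]
  apply IntegrableOn.union
  · exact Integrable.mono' (((intervalIntegral.intervalIntegrable_rpow' hβ).1).const_mul c)
      (hm.mono_set Ioc_subset_Ioi_self)
      ((ae_restrict_iff' measurableSet_Ioc).2 (Filter.Eventually.of_forall h1))
  · exact Integrable.mono' ((integrableOn_Ioi_rpow_of_lt hγ one_pos).const_mul c)
      (hm.mono_set (Ioi_subset_Ioi zero_le_one))
      ((ae_restrict_iff' measurableSet_Ioi).2 (Filter.Eventually.of_forall h2))

lemma meas_integrand {β : ℝ} : AEStronglyMeasurable (fun u : ℝ => u ^ β * ((2+u)/(1+u)^2))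
    (volume.restrict (Ioi 0)) := by
  apply Measurable.aestronglyMeasurable
  fun_prop

lemma integrableOn_main {α : ℝ} (hα2 : 2 < α) (hα3 : α < 3) :
    IntegrableOn (fun u : ℝ => u ^ (2-α) * ((2+u)/(1+u)^2)) (Ioi 0) := by
  apply integrableOn_Ioi_of_bounds meas_integrand
    (show (-1:ℝ) < 2-α by linarith) (show (1:ℝ)-α < -1 by linarith) (c := 3)
  · intro u ⟨hu0, hu1⟩
    have hup : (0:ℝ) ≤ u ^ (2-α) := Real.rpow_nonneg hu0.le _
    have hb : (2+u)/(1+u)^2 ≤ 3 := by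
      rw [div_le_iff₀ (by positivity)]
      nlinarith
    rw [Real.norm_eq_abs, abs_of_nonneg (by positivity)]
    calc u ^ (2-α) * ((2+u)/(1+u)^2) ≤ u ^ (2-α) * 3 :=
          mul_le_mul_of_nonneg_left hb hup
      _ = 3 * u ^ (2-α) := by ring
  · intro u hu
    rw [mem_Ioi] at hu
    have hu0 : (0:ℝ) < u := by linarith
    have hup : (0:ℝ) ≤ u ^ (2-α) := Real.rpow_nonneg hu0.le _
    have hb : (2+u)/(1+u)^2 ≤ 2/u := by
      rw [div_le_div_iff₀ (by positivity) hu0]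
      nlinarith
    rw [Real.norm_eq_abs, abs_of_nonneg (by positivity)]
    calc u ^ (2-α) * ((2+u)/(1+u)^2) ≤ u ^ (2-α) * (2/u) :=
          mul_le_mul_of_nonneg_left hb hup
      _ = 2 * (u ^ (2-α) / u ^ (1:ℝ)) := by rw [Real.rpow_one]; ring
      _ = 2 * u ^ (1-α) := by rw [← Real.rpow_sub hu0]; ring_nf
      _ ≤ 3 * u ^ (1-α) := by
          have := Real.rpow_nonneg hu0.le (1-α); linarith

lemma integrableOn_phi {α : ℝ} (hα2 : 2 < α) (hα3 : α < 3) :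
    IntegrableOn (fun u : ℝ => u ^ (2-α) / (1+u)) (Ioi 0) := by
  have hm : AEStronglyMeasurable (fun u : ℝ => u ^ (2-α) / (1+u))
      (volume.restrict (Ioi 0)) := by
    apply Measurable.aestronglyMeasurable; fun_prop
  apply integrableOn_Ioi_of_bounds hm
    (show (-1:ℝ) < 2-α by linarith) (show (1:ℝ)-α < -1 by linarith) (c := 1)
  · intro u ⟨hu0, hu1⟩
    have hup : (0:ℝ) ≤ u ^ (2-α) := Real.rpow_nonneg hu0.le _
    rw [Real.norm_eq_abs, abs_of_nonneg (by positivity), one_mul]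
    exact div_le_self hup (by linarith)
  · intro u hu
    rw [mem_Ioi] at hu
    have hu0 : (0:ℝ) < u := by linarith
    have hup : (0:ℝ) ≤ u ^ (2-α) := Real.rpow_nonneg hu0.le _
    rw [Real.norm_eq_abs, abs_of_nonneg (by positivity), one_mul]
    calc u ^ (2-α) / (1+u) ≤ u ^ (2-α) / u := by gcongr; linarith
      _ = u ^ (2-α) / u ^ (1:ℝ) := by rw [Real.rpow_one]
      _ = u ^ (1-α) := by rw [← Real.rpow_sub hu0]; ring_nf


lemma key_integral_value {α : ℝ} (hα2 : 2 < α) (hα3 : α < 3) :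
    ∫ u in Ioi (0:ℝ), u ^ (2-α) * ((2+u)/(1+u)^2)
      = (α-1) * (π / Real.sin (π * α)) := by
  have h30 : (0:ℝ) < 3 - α := by linarith
  have Iφ : IntegrableOn (fun u : ℝ => u ^ (2-α) / (1+u)) (Ioi 0) :=
    integrableOn_phi hα2 hα3
  have Iint : IntegrableOn (fun u : ℝ => u ^ (2-α) * ((2+u)/(1+u)^2)) (Ioi 0) :=
    integrableOn_main hα2 hα3
  set H : ℝ → ℝ := fun u => u ^ (3-α) / (1+u) with hH
  set H' : ℝ → ℝ := fun u =>
    u ^ (2-α) * ((2+u)/(1+u)^2) - (α-1) * (u ^ (2-α) / (1+u)) with hH'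
  have hd : ∀ u ∈ Ioi (0:ℝ), HasDerivAt H (H' u) u := by
    intro u hu
    rw [mem_Ioi] at hu
    have hne : (1:ℝ) + u ≠ 0 := by positivity
    have h1 : HasDerivAt (fun x : ℝ => x ^ (3-α)) ((3-α) * u ^ (3-α-1)) u :=
      Real.hasDerivAt_rpow_const (Or.inl (ne_of_gt hu))
    have h2 : HasDerivAt (fun x : ℝ => 1 + x) 1 u := by
      simpa using (hasDerivAt_id u).const_add 1
    have h3 := h1.div h2 hne
    refine h3.congr_deriv ?_
    have e1 : u ^ (3-α) = u ^ (2-α) * u := by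
      have h := Real.rpow_add hu (2-α) 1
      rw [Real.rpow_one] at h
      rw [← h]; ring_nf
    have e2 : u ^ (3-α-1) = u ^ (2-α) := by ring_nf
    rw [hH']
    simp only
    rw [e1, e2]
    field_simp
    ring
  have hcont : ContinuousWithinAt H (Ici 0) 0 := by
    apply ContinuousAt.continuousWithinAt
    apply ContinuousAt.div
    · exact Real.continuousAt_rpow_const 0 (3-α) (Or.inr h30.le)
    · exact (continuous_const.add continuous_id).continuousAt
    · norm_num
  have htend : Tendsto H atTop (𝓝 0) := by
    have hub : ∀ᶠ u in atTop, H u ≤ u ^ (2-α) := by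
      filter_upwards [eventually_gt_atTop (0:ℝ)] with u hu
      rw [hH]
      simp only
      rw [div_le_iff₀ (by positivity)]
      have e1 : u ^ (2-α) * u = u ^ (3-α) := by
        have h := Real.rpow_add hu (2-α) 1
        rw [Real.rpow_one] at h
        rw [← h]; ring_nf
      have hup : (0:ℝ) ≤ u ^ (2-α) := Real.rpow_nonneg hu.le _
      nlinarith [Real.rpow_nonneg hu.le (3-α)]
    have hlb : ∀ᶠ u in atTop, 0 ≤ H u := by
      filter_upwards [eventually_gt_atTop (0:ℝ)] with u hu
      rw [hH]
      positivity
    have hto : Tendsto (fun u : ℝ => u ^ (2-α)) atTop (𝓝 0) := by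
      have := tendsto_rpow_neg_atTop (show (0:ℝ) < α - 2 by linarith)
      convert this using 2 with u
      ring_nf
    exact tendsto_of_tendsto_of_tendsto_of_le_of_le' tendsto_const_nhds hto hlb hub
  have hIH' : IntegrableOn H' (Ioi 0) := Iint.sub (Iφ.const_mul (α-1))
  have hibp := integral_Ioi_of_hasDerivAt_of_tendsto hcont hd hIH' htend
  have hH0 : H 0 = 0 := by
    rw [hH]
    simp only
    rw [Real.zero_rpow (ne_of_gt h30)]
    norm_num
  rw [hH0, sub_zero] at hibp
  have hsplit : ∫ u in Ioi (0:ℝ), H' u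
      = (∫ u in Ioi (0:ℝ), u ^ (2-α) * ((2+u)/(1+u)^2))
        - (α-1) * ∫ u in Ioi (0:ℝ), u ^ (2-α) / (1+u) := by
    rw [hH']
    rw [integral_sub Iint (Iφ.const_mul (α-1)), integral_const_mul]
  have hφval : ∫ u in Ioi (0:ℝ), u ^ (2-α) / (1+u) = π / Real.sin (π * α) := by
    have h := integral_rpow_div_one_add (s := 3-α) h30 (by linarith)
    have hs : Real.sin (π * (3-α)) = Real.sin (π * α) := by
      rw [show π * (3-α) = (π - π * α) + 2 * π by ring, Real.sin_add_two_pi,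
        Real.sin_pi_sub]
    rw [show (3:ℝ)-α-1 = 2-α by ring, hs] at h
    exact h
  rw [hsplit, hφval] at hibp
  linarith

end AuxiliaryLemmas

section Main

open Set

/-- Let `w ≥ 0` with tail `P(w > x) ~ C x^{-(α-1)}` for some `C > 0`
and `α ∈ (2,3)`. Then `E[w²/(1+σw)] ~ C(α−1)π/sin(πα) · σ^{α−3}` as `σ → 0⁺`,
i.e. `σ^{3−α} E[w²/(1+σw)] → C(α−1)π/sin(πα)`. -/
theorem tail_asymptotics_alpha_two_three
    {Ω : Type*} [MeasurableSpace Ω] (μ : Measure Ω) [IsProbabilityMeasure μ]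
    (w : Ω → ℝ) (hw_meas : Measurable w) (hw_nonneg : ∀ ω, 0 ≤ w ω)
    (C α : ℝ) (hC : 0 < C) (hα : α ∈ Set.Ioo (2 : ℝ) 3)
    (htail : Tendsto (fun x : ℝ => x ^ (α - 1) * (μ {ω | x < w ω}).toReal)
      atTop (𝓝 C)) :
    Tendsto (fun σ : ℝ => σ ^ (3 - α) * ∫ ω, (w ω) ^ 2 / (1 + σ * w ω) ∂μ)
      (𝓝[>] 0) (𝓝 (C * (α - 1) * Real.pi / Real.sin (Real.pi * α))) := by
  obtain ⟨hα2, hα3⟩ := hα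
  set Tail : ℝ → ℝ := fun x => (μ {ω | x < w ω}).toReal with hTail
  have hTmeas_enn : Measurable (fun x : ℝ => μ {ω | x < w ω}) := by
    apply Antitone.measurable
    intro a b hab
    exact measure_mono (fun ω hω => lt_of_le_of_lt hab hω)
  have hTail_meas : Measurable Tail := hTmeas_enn.ennreal_toReal
  have hTail_nonneg : ∀ x, 0 ≤ Tail x := fun x => ENNReal.toReal_nonneg
  have hTail_le_one : ∀ x, Tail x ≤ 1 := fun x => by
    simpa using ENNReal.toReal_mono ENNReal.one_ne_top prob_le_one
  -- global tail bound
  obtain ⟨M, hM_pos, hM⟩ : ∃ M, 0 < M ∧ ∀ x, 0 < x → Tail x ≤ M * x ^ (1-α) := by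
    have hev : ∀ᶠ x in atTop, x ^ (α-1) * Tail x ≤ C + 1 :=
      htail.eventually (eventually_le_nhds (lt_add_one C))
    obtain ⟨x₁, hx₁⟩ := eventually_atTop.mp hev
    set x₀ : ℝ := max x₁ 1 with hx₀def
    have hx₀pos : (0:ℝ) < x₀ := lt_of_lt_of_le one_pos (le_max_right _ _)
    set M := max (C+1) (x₀ ^ (α-1)) with hMdef
    refine ⟨M, lt_of_lt_of_le (by linarith) (le_max_left _ _), ?_⟩
    intro x hx
    have hxinv : (0:ℝ) ≤ x ^ (1-α) := Real.rpow_nonneg hx.le _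
    rcases le_or_gt x₀ x with h | h
    · have hb : x ^ (α-1) * Tail x ≤ C + 1 := hx₁ x (le_trans (le_max_left _ _) h)
      have hxx : x ^ (α-1) * x ^ (1-α) = 1 := by
        rw [← Real.rpow_add hx, show α-1+(1-α) = 0 by ring, Real.rpow_zero]
      calc Tail x = x ^ (α-1) * Tail x * x ^ (1-α) := by
            rw [mul_comm (x ^ (α-1)) (Tail x), mul_assoc, hxx, mul_one]
        _ ≤ (C+1) * x ^ (1-α) := mul_le_mul_of_nonneg_right hb hxinv
        _ ≤ M * x ^ (1-α) := mul_le_mul_of_nonneg_right (le_max_left _ _) hxinv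
    · have hxx : x₀ ^ (α-1) * x₀ ^ (1-α) = 1 := by
        rw [← Real.rpow_add hx₀pos, show α-1+(1-α) = 0 by ring, Real.rpow_zero]
      have hmono : x₀ ^ (1-α) ≤ x ^ (1-α) :=
        Real.rpow_le_rpow_of_nonpos hx h.le (by linarith)
      have hx₀p : (0:ℝ) ≤ x₀ ^ (α-1) := Real.rpow_nonneg hx₀pos.le _
      calc Tail x ≤ 1 := hTail_le_one x
        _ = x₀ ^ (α-1) * x₀ ^ (1-α) := hxx.symm
        _ ≤ x₀ ^ (α-1) * x ^ (1-α) := mul_le_mul_of_nonneg_left hmono hx₀p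
        _ ≤ M * x ^ (1-α) := mul_le_mul_of_nonneg_right (le_max_right _ _) hxinv
  -- key rewriting of the functional for fixed σ > 0
  have key : ∀ σ : ℝ, 0 < σ →
      σ ^ (3-α) * ∫ ω, (w ω) ^ 2 / (1 + σ * w ω) ∂μ
        = ∫ u in Ioi (0:ℝ), u * (2+u)/(1+u)^2 * (σ ^ (1-α) * Tail (u/σ)) := by
    intro σ hσ
    set g : ℝ → ℝ := fun t => t * (2+σ*t)/(1+σ*t)^2 with hg
    have hgcont : ∀ t : ℝ, 0 ≤ t → ContinuousWithinAt g (Ici 0) t := by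
      intro t ht
      have hne : (1:ℝ) + σ*t ≠ 0 := by positivity
      apply ContinuousAt.continuousWithinAt
      apply ContinuousAt.div
      · fun_prop
      · fun_prop
      · positivity
    have hgI : ∀ b : ℝ, 0 ≤ b → IntervalIntegrable g volume 0 b := by
      intro b hb
      apply ContinuousOn.intervalIntegrable
      rw [uIcc_of_le hb]
      intro t ht
      exact (hgcont t ht.1).mono (Icc_subset_Ici_self)
    have hFTC : ∀ b : ℝ, 0 ≤ b → ∫ t in (0:ℝ)..b, g t = b^2/(1+σ*b) := by
      intro b hb
      have hd : ∀ t ∈ uIcc (0:ℝ) b, HasDerivAt (fun x => x^2/(1+σ*x)) (g t) t := by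
        intro t ht
        rw [uIcc_of_le hb] at ht
        have htnn : (0:ℝ) ≤ t := ht.1
        have hne : (1:ℝ) + σ*t ≠ 0 := by positivity
        have h1 : HasDerivAt (fun x : ℝ => x^2) (2*t) t := by
          simpa using (hasDerivAt_pow 2 t)
        have h2 : HasDerivAt (fun x : ℝ => 1 + σ*x) σ t := by
          simpa using ((hasDerivAt_id t).const_mul σ).const_add 1
        have h3 := h1.div h2 hne
        refine h3.congr_deriv ?_
        rw [hg]
        simp only
        field_simp
        ring
      have := intervalIntegral.integral_eq_sub_of_hasDerivAt hd (hgI b hb)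
      simpa using this
    have hnn : 0 ≤ᵐ[μ] fun ω => (w ω)^2/(1+σ*w ω) := by
      apply ae_of_all
      intro ω
      have := hw_nonneg ω
      positivity
    have hmeasf : AEStronglyMeasurable (fun ω => (w ω)^2/(1+σ*w ω)) μ := by
      apply Measurable.aestronglyMeasurable
      fun_prop
    have step1 : ∫ ω, (w ω)^2/(1+σ*w ω) ∂μ
        = (∫⁻ ω, ENNReal.ofReal ((w ω)^2/(1+σ*w ω)) ∂μ).toReal := by
      rw [integral_eq_lintegral_of_nonneg_ae hnn hmeasf]
    have hgnn : ∀ᵐ t ∂(volume.restrict (Ioi (0:ℝ))), 0 ≤ g t := by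
      rw [ae_restrict_iff' measurableSet_Ioi]
      apply ae_of_all
      intro t ht
      rw [mem_Ioi] at ht
      rw [hg]
      positivity
    have step2 : ∫⁻ ω, ENNReal.ofReal ((w ω)^2/(1+σ*w ω)) ∂μ
        = ∫⁻ t in Ioi 0, μ {ω | t < w ω} * ENNReal.ofReal (g t) := by
      have hcomp : ∀ ω, ENNReal.ofReal ((w ω)^2/(1+σ*w ω))
          = ENNReal.ofReal (∫ t in (0:ℝ)..(w ω), g t) := fun ω => by
        rw [hFTC (w ω) (hw_nonneg ω)]
      simp_rw [hcomp]
      exact lintegral_comp_eq_lintegral_meas_lt_mul μ (ae_of_all _ hw_nonneg)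
        hw_meas.aemeasurable (fun t ht => hgI t ht.le) hgnn
    have step3 : (∫⁻ t in Ioi (0:ℝ), μ {ω | t < w ω} * ENNReal.ofReal (g t)).toReal
        = ∫ t in Ioi (0:ℝ), Tail t * g t := by
      rw [← integral_toReal]
      · apply setIntegral_congr_fun measurableSet_Ioi
        intro t ht
        rw [mem_Ioi] at ht
        have hgpos : 0 ≤ g t := by
          rw [hg]
          simp only
          positivity
        simp only
        rw [ENNReal.toReal_mul, ENNReal.toReal_ofReal hgpos]
      · apply Measurable.aemeasurable
        exact hTmeas_enn.mul (by fun_prop)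
      · apply ae_of_all
        intro t
        exact ENNReal.mul_lt_top (measure_lt_top μ _) ENNReal.ofReal_lt_top
    have hcov := integral_comp_mul_left_Ioi (fun t => Tail t * g t) 0 (inv_pos.mpr hσ)
    rw [mul_zero, inv_inv] at hcov
    have step4 : ∫ t in Ioi (0:ℝ), Tail t * g t
        = σ⁻¹ * ∫ u in Ioi (0:ℝ), Tail (σ⁻¹ * u) * g (σ⁻¹ * u) := by
      rw [hcov, smul_eq_mul, ← mul_assoc, inv_mul_cancel₀ (ne_of_gt hσ), one_mul]
    rw [step1, step2, step3, step4]
    rw [← mul_assoc, ← integral_const_mul]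
    apply setIntegral_congr_fun measurableSet_Ioi
    intro u hu
    rw [mem_Ioi] at hu
    have hσu : σ * (σ⁻¹ * u) = u := by field_simp
    have hdiv : u / σ = σ⁻¹ * u := by rw [div_eq_mul_inv, mul_comm]
    have hsc : σ ^ (3-α) * σ⁻¹ * σ⁻¹ = σ ^ (1-α) := by
      have hpow : σ ^ (1-α) * σ^2 = σ ^ (3-α) := by
        rw [← Real.rpow_natCast σ 2, ← Real.rpow_add hσ]
        congr 1
        push_cast
        ring
      field_simp
      rw [← hpow]
      ring
    rw [hg]
    simp only
    rw [hσu, hdiv]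
    calc σ ^ (3-α) * σ⁻¹ * (Tail (σ⁻¹*u) * ((σ⁻¹*u) * (2+u)/(1+u)^2))
        = (σ ^ (3-α) * σ⁻¹ * σ⁻¹) * (u * (2+u)/(1+u)^2 * Tail (σ⁻¹*u)) := by ring
      _ = u * (2+u)/(1+u)^2 * (σ ^ (1-α) * Tail (σ⁻¹*u)) := by rw [hsc]; ring
  -- main convergence
  have hlim : ∫ u in Ioi (0:ℝ), C * (u ^ (2-α) * ((2+u)/(1+u)^2))
      = C * (α-1) * π / Real.sin (π * α) := by
    rw [integral_const_mul, key_integral_value hα2 hα3]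
    ring
  have hmain : Tendsto (fun σ : ℝ =>
      ∫ u in Ioi (0:ℝ), u * (2+u)/(1+u)^2 * (σ ^ (1-α) * Tail (u/σ)))
      (𝓝[>] 0) (𝓝 (C * (α-1) * π / Real.sin (π * α))) := by
    rw [← hlim]
    apply tendsto_integral_filter_of_dominated_convergence
      (bound := fun u => M * (u ^ (2-α) * ((2+u)/(1+u)^2)))
    · filter_upwards [self_mem_nhdsWithin] with σ hσ
      apply Measurable.aestronglyMeasurable
      apply Measurable.mul
      · fun_prop
      · exact measurable_const.mul (hTail_meas.comp (measurable_id.div_const σ))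
    · filter_upwards [self_mem_nhdsWithin] with σ hσ
      rw [mem_Ioi] at hσ
      rw [ae_restrict_iff' measurableSet_Ioi]
      apply ae_of_all
      intro u hu
      rw [mem_Ioi] at hu
      have hTnn := hTail_nonneg (u/σ)
      have h1 : σ ^ (1-α) * Tail (u/σ) ≤ M * u ^ (1-α) := by
        calc σ ^ (1-α) * Tail (u/σ) ≤ σ ^ (1-α) * (M * (u/σ) ^ (1-α)) :=
              mul_le_mul_of_nonneg_left (hM (u/σ) (div_pos hu hσ))
                (Real.rpow_nonneg hσ.le _)
          _ = M * u ^ (1-α) := by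
              rw [Real.div_rpow hu.le hσ.le]
              have hσp : (0:ℝ) < σ ^ (1-α) := Real.rpow_pos_of_pos hσ _
              field_simp
      have hval_nn : 0 ≤ u * (2+u)/(1+u)^2 * (σ ^ (1-α) * Tail (u/σ)) :=
        mul_nonneg (by positivity) (mul_nonneg (Real.rpow_nonneg hσ.le _) hTnn)
      rw [Real.norm_eq_abs, abs_of_nonneg hval_nn]
      have e1 : u ^ (1-α) * u = u ^ (2-α) := by
        have h := Real.rpow_add hu (1-α) 1
        rw [Real.rpow_one] at h
        rw [← h]
        ring_nf
      calc u * (2+u)/(1+u)^2 * (σ ^ (1-α) * Tail (u/σ))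
          ≤ u * (2+u)/(1+u)^2 * (M * u ^ (1-α)) :=
            mul_le_mul_of_nonneg_left h1 (by positivity)
        _ = M * ((u ^ (1-α) * u) * ((2+u)/(1+u)^2)) := by ring
        _ = M * (u ^ (2-α) * ((2+u)/(1+u)^2)) := by rw [e1]
    · exact (integrableOn_main hα2 hα3).const_mul M
    · rw [ae_restrict_iff' measurableSet_Ioi]
      apply ae_of_all
      intro u hu
      rw [mem_Ioi] at hu
      have h1 : Tendsto (fun σ : ℝ => u / σ) (𝓝[>] (0:ℝ)) atTop := by
        have h2 := tendsto_inv_nhdsGT_zero.const_mul_atTop hu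
        apply h2.congr
        intro σ
        rw [div_eq_mul_inv]
      have h2 : Tendsto (fun σ : ℝ => (u/σ) ^ (α-1) * Tail (u/σ)) (𝓝[>] (0:ℝ)) (𝓝 C) :=
        htail.comp h1
      have h3 := (h2.const_mul (u ^ (1-α))).const_mul (u * (2+u)/(1+u)^2)
      have e1 : u ^ (1-α) * u = u ^ (2-α) := by
        have h := Real.rpow_add hu (1-α) 1
        rw [Real.rpow_one] at h
        rw [← h]
        ring_nf
      have hlimeq : u * (2+u)/(1+u)^2 * (u ^ (1-α) * C)
          = C * (u ^ (2-α) * ((2+u)/(1+u)^2)) := by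
        rw [← e1]; ring
      rw [hlimeq] at h3
      apply Tendsto.congr' _ h3
      filter_upwards [self_mem_nhdsWithin] with σ hσ
      rw [mem_Ioi] at hσ
      have hsc : u ^ (1-α) * (u/σ) ^ (α-1) = σ ^ (1-α) := by
        have huu : u ^ (1-α) * u ^ (α-1) = 1 := by
          rw [← Real.rpow_add hu, show 1-α+(α-1) = 0 by ring, Real.rpow_zero]
        have hσs : σ ^ (1-α) = (σ ^ (α-1))⁻¹ := by
          rw [show (1-α) = -(α-1) by ring, Real.rpow_neg hσ.le]
        rw [Real.div_rpow hu.le hσ.le, hσs, div_eq_mul_inv, ← mul_assoc, huu, one_mul]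
      rw [← hsc]
      ring
  apply Tendsto.congr' _ hmain
  filter_upwards [self_mem_nhdsWithin] with σ hσ
  rw [mem_Ioi] at hσ
  exact (key σ hσ).symm

end Main
end

section
/- Let w be a nonnegative real random variable and let C > 0 be such that lim_{x→∞} x² P(w > x) = C (i.e. the tail exponent is α = 3). Then lim_{σ→0⁺} E[w²/(1+σw)] / (−log σ) = 2C. -/
open MeasureTheory Filter Real Set
open scoped Topology

lemma ta_denom_pos {σ t : ℝ} (hσ : 0 < σ) (ht : 0 ≤ t) : 0 < 1 + σ * t := by positivity

lemma ta_hasDerivAt_G {σ : ℝ} (hσ : 0 < σ) {t : ℝ} (ht : 0 ≤ t) :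
    HasDerivAt (fun s => s ^ 2 / (1 + σ * s)) ((2 * t + σ * t ^ 2) / (1 + σ * t) ^ 2) t := by
  have hne : (1 + σ * t) ≠ 0 := (ta_denom_pos hσ ht).ne'
  have h1 : HasDerivAt (fun s : ℝ => s ^ 2) (2 * t) t := by
    simpa using hasDerivAt_pow 2 t
  have h2 : HasDerivAt (fun s : ℝ => 1 + σ * s) σ t := by
    simpa using ((hasDerivAt_id t).const_mul σ).const_add 1
  have := h1.div h2 hne
  simp only [Pi.div_def] at this
  refine this.congr_deriv ?_
  field_simp
  ring

lemma ta_g_nonneg {σ : ℝ} (hσ : 0 < σ) {t : ℝ} (ht : 0 ≤ t) :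
    0 ≤ (2 * t + σ * t ^ 2) / (1 + σ * t) ^ 2 := by positivity

lemma ta_g_contOn {σ : ℝ} (hσ : 0 < σ) {s : Set ℝ} (hs : ∀ t ∈ s, 0 ≤ t) :
    ContinuousOn (fun t => (2 * t + σ * t ^ 2) / (1 + σ * t) ^ 2) s := by
  apply ContinuousOn.div (by fun_prop) (by fun_prop)
  intro t ht
  exact pow_ne_zero 2 (ta_denom_pos hσ (hs t ht)).ne'

lemma ta_intervalIntegrable {σ : ℝ} (hσ : 0 < σ) {x : ℝ} (hx : 0 ≤ x) :
    IntervalIntegrable (fun t => (2 * t + σ * t ^ 2) / (1 + σ * t) ^ 2) volume 0 x := by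
  apply ContinuousOn.intervalIntegrable
  apply ta_g_contOn hσ
  intro t ht
  rw [uIcc_of_le hx] at ht
  exact ht.1

lemma ta_integral_g {σ : ℝ} (hσ : 0 < σ) {x : ℝ} (hx : 0 ≤ x) :
    ∫ t in (0:ℝ)..x, (2 * t + σ * t ^ 2) / (1 + σ * t) ^ 2 = x ^ 2 / (1 + σ * x) := by
  have := intervalIntegral.integral_eq_sub_of_hasDerivAt
    (f := fun s => s ^ 2 / (1 + σ * s))
    (f' := fun t => (2 * t + σ * t ^ 2) / (1 + σ * t) ^ 2)
    (a := 0) (b := x)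
    (fun t ht => ta_hasDerivAt_G hσ (by rw [uIcc_of_le hx] at ht; exact ht.1))
    (ta_intervalIntegrable hσ hx)
  rw [this]
  norm_num

noncomputable def taPhi (σ A : ℝ) : ℝ :=
  2 * Real.log A - 2 * Real.log (1 + σ * A) + 1 / (1 + σ * A)

lemma ta_hasDerivAt_Phi {σ : ℝ} (hσ : 0 < σ) {t : ℝ} (ht : 0 < t) :
    HasDerivAt (fun s => taPhi σ s) ((2 * t + σ * t ^ 2) / (1 + σ * t) ^ 2 / t ^ 2) t := by
  have hpos : 0 < 1 + σ * t := ta_denom_pos hσ ht.le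
  have hne : (1 + σ * t) ≠ 0 := hpos.ne'
  have h2 : HasDerivAt (fun s : ℝ => 1 + σ * s) σ t := by
    simpa using ((hasDerivAt_id t).const_mul σ).const_add 1
  have hlog1 : HasDerivAt (fun s : ℝ => Real.log s) t⁻¹ t := Real.hasDerivAt_log ht.ne'
  have hlog2 : HasDerivAt (fun s : ℝ => Real.log (1 + σ * s)) (σ / (1 + σ * t)) t := by
    have := (Real.hasDerivAt_log hne).comp t h2
    simpa [div_eq_inv_mul, Function.comp_def] using this
  have hinv : HasDerivAt (fun s : ℝ => 1 / (1 + σ * s)) (-(σ / (1 + σ * t) ^ 2)) t := by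
    have := h2.inv hne
    simpa [one_div, div_eq_mul_inv, Pi.inv_def] using this
  have H := ((hlog1.const_mul 2).sub (hlog2.const_mul 2)).add hinv
  simp only [Pi.add_def, Pi.sub_def] at H
  refine H.congr_deriv ?_
  field_simp
  ring

lemma ta_phi_tendsto_atTop {σ : ℝ} (hσ : 0 < σ) :
    Tendsto (fun t => taPhi σ t) atTop (𝓝 (-2 * Real.log σ)) := by
  have hA : Tendsto (fun t : ℝ => 1 / t + σ) atTop (𝓝 (0 + σ)) := by
    exact (tendsto_inv_atTop_zero.congr (fun x => (one_div x).symm)).add_const σ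
  have hlog : Tendsto (fun t : ℝ => Real.log (1 / t + σ)) atTop (𝓝 (Real.log σ)) := by
    have := ((Real.continuousAt_log hσ.ne').tendsto).comp (by simpa using hA)
    simpa [Function.comp_def] using this
  have hden : Tendsto (fun t : ℝ => 1 + σ * t) atTop atTop := by
    exact tendsto_atTop_add_const_left atTop 1 (tendsto_id.const_mul_atTop hσ)
  have hB : Tendsto (fun t : ℝ => 1 / (1 + σ * t)) atTop (𝓝 0) := by
    simpa [one_div, Pi.inv_def] using hden.inv_tendsto_atTop
  have H := (hlog.const_mul (-2)).add hB
  rw [add_zero] at H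
  apply H.congr'
  filter_upwards [eventually_gt_atTop (0:ℝ)] with t ht
  have hpos : 0 < 1 + σ * t := ta_denom_pos hσ ht.le
  have : (1 / t + σ) = (1 + σ * t) / t := by field_simp
  rw [this, Real.log_div hpos.ne' ht.ne']
  unfold taPhi
  ring

lemma ta_tail_integrable {σ A : ℝ} (hσ : 0 < σ) (hA : 0 < A) :
    IntegrableOn (fun t => (2 * t + σ * t ^ 2) / (1 + σ * t) ^ 2 / t ^ 2) (Ioi A) := by
  apply integrableOn_Ioi_deriv_of_nonneg'
    (fun x hx => ta_hasDerivAt_Phi hσ (lt_of_lt_of_le hA hx))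
    (fun x hx => ?_) (ta_phi_tendsto_atTop hσ)
  have hx0 : 0 < x := hA.trans hx
  positivity

lemma ta_tail_integral {σ A : ℝ} (hσ : 0 < σ) (hA : 0 < A) :
    ∫ t in Ioi A, (2 * t + σ * t ^ 2) / (1 + σ * t) ^ 2 / t ^ 2 =
      -2 * Real.log σ - taPhi σ A := by
  apply integral_Ioi_of_hasDerivAt_of_nonneg'
    (fun x hx => ta_hasDerivAt_Phi hσ (lt_of_lt_of_le hA hx))
    (fun x hx => ?_) (ta_phi_tendsto_atTop hσ)
  have hx0 : 0 < x := hA.trans hx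
  positivity

lemma ta_neg_log_tendsto : Tendsto (fun σ : ℝ => -Real.log σ) (𝓝[>] 0) atTop :=
  tendsto_neg_atBot_atTop.comp Real.tendsto_log_nhdsGT_zero

lemma ta_phi_tendsto_zero (A : ℝ) :
    Tendsto (fun σ : ℝ => taPhi σ A) (𝓝[>] 0) (𝓝 (2 * Real.log A + 1)) := by
  have hd : Tendsto (fun σ : ℝ => 1 + σ * A) (𝓝[>] (0:ℝ)) (𝓝 1) := by
    have hc : Continuous (fun σ : ℝ => 1 + σ * A) := by fun_prop
    have := hc.tendsto' 0 1 (by norm_num)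
    exact this.mono_left nhdsWithin_le_nhds
  have hlog : Tendsto (fun σ : ℝ => Real.log (1 + σ * A)) (𝓝[>] (0:ℝ)) (𝓝 0) := by
    have := ((Real.continuousAt_log one_ne_zero).tendsto).comp hd
    simpa [Function.comp_def] using this
  have hinv1 : Tendsto (fun σ : ℝ => 1 / (1 + σ * A)) (𝓝[>] (0:ℝ)) (𝓝 1) := by
    have := hd.inv₀ one_ne_zero
    simpa [one_div] using this
  have H := ((tendsto_const_nhds (x := 2 * Real.log A)).sub (hlog.const_mul 2)).add hinv1
  simpa [taPhi] using H

lemma ta_limit (A b c : ℝ) :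
    Tendsto (fun σ : ℝ => (b + c * (-2 * Real.log σ - taPhi σ A)) / (-Real.log σ))
      (𝓝[>] 0) (𝓝 (2 * c)) := by
  have hinv : Tendsto (fun σ : ℝ => (-Real.log σ)⁻¹) (𝓝[>] (0:ℝ)) (𝓝 0) :=
    ta_neg_log_tendsto.inv_tendsto_atTop
  have hphi := ta_phi_tendsto_zero A
  have H := (hinv.const_mul b).add
    (((tendsto_const_nhds (x := (2:ℝ))).sub (hphi.mul hinv)).const_mul c)
  have hval : b * 0 + c * (2 - (2 * Real.log A + 1) * 0) = 2 * c := by ring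
  rw [hval] at H
  apply H.congr'
  filter_upwards [Ioo_mem_nhdsGT_of_mem (by constructor <;> norm_num : (0:ℝ) ∈ Ico (0:ℝ) 1)]
    with σ hσ
  have hls : Real.log σ ≠ 0 := (Real.log_neg hσ.1 hσ.2).ne
  field_simp [hls]
  ring

/-- Let `w ≥ 0` with tail `P(w > x) ~ C x^{-2}` for some `C > 0`
(tail exponent `α = 3`). Then `E[w²/(1+σw)]/(−log σ) → 2C` as `σ → 0⁺`. -/
theorem tail_asymptotics_alpha_three
    {Ω : Type*} [MeasurableSpace Ω] (μ : Measure Ω) [IsProbabilityMeasure μ]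
    (w : Ω → ℝ) (hw_meas : Measurable w) (hw_nonneg : ∀ ω, 0 ≤ w ω)
    (C : ℝ) (hC : 0 < C)
    (htail : Tendsto (fun x : ℝ => x ^ 2 * (μ {ω | x < w ω}).toReal)
      atTop (𝓝 C)) :
    Tendsto (fun σ : ℝ => (∫ ω, (w ω) ^ 2 / (1 + σ * w ω) ∂μ) / (-Real.log σ))
      (𝓝[>] 0) (𝓝 (2 * C)) := by
  set F : ℝ → ℝ := fun t => (μ {ω | t < w ω}).toReal with hF_def
  rw [Metric.tendsto_nhds]
  intro ε' hε'
  set ε : ℝ := min (C / 2) (ε' / 8) with hε_def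
  have hε : 0 < ε := lt_min (by linarith) (by linarith)
  have hεC : ε < C := lt_of_le_of_lt (min_le_left _ _) (by linarith)
  have hεε' : 8 * ε ≤ ε' := by
    have := min_le_right (C / 2) (ε' / 8)
    linarith
  -- choose A from the tail hypothesis
  obtain ⟨A0, hA0⟩ : ∃ A0 : ℝ, ∀ x ≥ A0, |x ^ 2 * F x - C| ≤ ε := by
    have := (Metric.tendsto_nhds.1 htail) ε hε
    rw [eventually_atTop] at this
    obtain ⟨A0, hA0⟩ := this
    exact ⟨A0, fun x hx => by
      have := hA0 x hx
      rw [Real.dist_eq] at this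
      exact this.le⟩
  set A : ℝ := max A0 1 with hA_def
  have hA1 : (1:ℝ) ≤ A := le_max_right _ _
  have hA0' : (0:ℝ) < A := lt_of_lt_of_le one_pos hA1
  have hF_ub : ∀ t : ℝ, A ≤ t → F t ≤ (C + ε) / t ^ 2 := by
    intro t ht
    have ht0 : (0:ℝ) < t := lt_of_lt_of_le hA0' ht
    have hb := hA0 t (le_trans (le_max_left _ _) ht)
    rw [abs_le] at hb
    rw [le_div_iff₀ (by positivity)]
    nlinarith [hb.2]
  have hF_lb : ∀ t : ℝ, A ≤ t → (C - ε) / t ^ 2 ≤ F t := by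
    intro t ht
    have ht0 : (0:ℝ) < t := lt_of_lt_of_le hA0' ht
    have hb := hA0 t (le_trans (le_max_left _ _) ht)
    rw [abs_le] at hb
    rw [div_le_iff₀ (by positivity)]
    nlinarith [hb.1]
  -- the two limit statements
  have hU := ta_limit A (A ^ 2) (C + ε)
  have hL := ta_limit A 0 (C - ε)
  have e2 : ∀ᶠ σ : ℝ in 𝓝[>] 0,
      (A ^ 2 + (C + ε) * (-2 * Real.log σ - taPhi σ A)) / (-Real.log σ) < 2 * C + ε' :=
    hU.eventually_lt_const (by linarith)
  have e3 : ∀ᶠ σ : ℝ in 𝓝[>] 0,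
      2 * C - ε' < (0 + (C - ε) * (-2 * Real.log σ - taPhi σ A)) / (-Real.log σ) :=
    hL.eventually_const_lt (by linarith)
  have e1 : ∀ᶠ σ : ℝ in 𝓝[>] (0:ℝ), σ ∈ Ioo (0:ℝ) 1 := by
    filter_upwards [Ioo_mem_nhdsGT_of_mem (⟨le_refl 0, one_pos⟩ : (0:ℝ) ∈ Ico (0:ℝ) 1)]
      with x hx using hx
  filter_upwards [e1, e2, e3] with σ hσ h2 h3
  have hσ0 : 0 < σ := hσ.1
  have hσ1 : σ < 1 := hσ.2
  have hu : 0 < -Real.log σ := by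
    have := Real.log_neg hσ0 hσ1
    linarith
  set Tv : ℝ := -2 * Real.log σ - taPhi σ A with hTv_def
  have hTval : ∫ t in Ioi A, (2 * t + σ * t ^ 2) / (1 + σ * t) ^ 2 / t ^ 2 = Tv :=
    ta_tail_integral hσ0 hA0'
  have hTint := ta_tail_integrable hσ0 hA0'
  have hTnn : 0 ≤ Tv := by
    rw [← hTval]
    apply setIntegral_nonneg measurableSet_Ioi
    intro x hx
    have hx0 : 0 < x := hA0'.trans hx
    positivity
  -- layer cake
  have hlc : ∫⁻ ω, ENNReal.ofReal ((w ω) ^ 2 / (1 + σ * w ω)) ∂μ =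
      ∫⁻ t in Ioi 0, μ {ω | t < w ω} * ENNReal.ofReal ((2 * t + σ * t ^ 2) / (1 + σ * t) ^ 2) := by
    rw [← lintegral_comp_eq_lintegral_meas_lt_mul μ (ae_of_all _ hw_nonneg)
      hw_meas.aemeasurable (fun t ht => ta_intervalIntegrable hσ0 ht.le)
      (by filter_upwards [ae_restrict_mem measurableSet_Ioi] with t ht
          exact ta_g_nonneg hσ0 ht.le)]
    apply lintegral_congr fun ω => ?_
    rw [ta_integral_g hσ0 (hw_nonneg ω)]
  set J : ENNReal := ∫⁻ t in Ioi 0,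
      μ {ω | t < w ω} * ENNReal.ofReal ((2 * t + σ * t ^ 2) / (1 + σ * t) ^ 2) with hJ_def
  -- upper bound on the bounded part
  have hpart1 : ∫⁻ t in Ioc 0 A,
      μ {ω | t < w ω} * ENNReal.ofReal ((2 * t + σ * t ^ 2) / (1 + σ * t) ^ 2)
      ≤ ENNReal.ofReal (A ^ 2) := by
    calc ∫⁻ t in Ioc 0 A,
        μ {ω | t < w ω} * ENNReal.ofReal ((2 * t + σ * t ^ 2) / (1 + σ * t) ^ 2)
        ≤ ∫⁻ t in Ioc 0 A, ENNReal.ofReal ((2 * t + σ * t ^ 2) / (1 + σ * t) ^ 2) := by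
          apply setLIntegral_mono' measurableSet_Ioc (fun t ht => ?_)
          calc μ {ω | t < w ω} * ENNReal.ofReal ((2 * t + σ * t ^ 2) / (1 + σ * t) ^ 2)
              ≤ 1 * ENNReal.ofReal ((2 * t + σ * t ^ 2) / (1 + σ * t) ^ 2) := by
                gcongr
                exact prob_le_one
            _ = _ := one_mul _
      _ = ENNReal.ofReal (∫ t in Ioc 0 A, (2 * t + σ * t ^ 2) / (1 + σ * t) ^ 2) := by
          refine (ofReal_integral_eq_lintegral_ofReal
            ((ta_intervalIntegrable hσ0 hA0'.le).1) ?_).symm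
          filter_upwards [ae_restrict_mem measurableSet_Ioc] with t ht
          exact ta_g_nonneg hσ0 ht.1.le
      _ ≤ ENNReal.ofReal (A ^ 2) := by
          apply ENNReal.ofReal_le_ofReal
          rw [← intervalIntegral.integral_of_le hA0'.le, ta_integral_g hσ0 hA0'.le]
          apply div_le_self (by positivity)
          nlinarith
  -- upper bound on the tail part
  have hpart2u : ∫⁻ t in Ioi A,
      μ {ω | t < w ω} * ENNReal.ofReal ((2 * t + σ * t ^ 2) / (1 + σ * t) ^ 2)
      ≤ ENNReal.ofReal ((C + ε) * Tv) := by
    calc ∫⁻ t in Ioi A,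
        μ {ω | t < w ω} * ENNReal.ofReal ((2 * t + σ * t ^ 2) / (1 + σ * t) ^ 2)
        ≤ ∫⁻ t in Ioi A,
            ENNReal.ofReal ((C + ε) * ((2 * t + σ * t ^ 2) / (1 + σ * t) ^ 2 / t ^ 2)) := by
          apply setLIntegral_mono' measurableSet_Ioi (fun t ht => ?_)
          have ht0 : 0 < t := hA0'.trans ht
          have hgnn : 0 ≤ (2 * t + σ * t ^ 2) / (1 + σ * t) ^ 2 := ta_g_nonneg hσ0 ht0.le
          rw [← ENNReal.ofReal_toReal (measure_ne_top μ {ω | t < w ω}),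
            ← ENNReal.ofReal_mul ENNReal.toReal_nonneg]
          apply ENNReal.ofReal_le_ofReal
          calc F t * ((2 * t + σ * t ^ 2) / (1 + σ * t) ^ 2)
              ≤ ((C + ε) / t ^ 2) * ((2 * t + σ * t ^ 2) / (1 + σ * t) ^ 2) :=
                mul_le_mul_of_nonneg_right (hF_ub t ht.le) hgnn
            _ = (C + ε) * ((2 * t + σ * t ^ 2) / (1 + σ * t) ^ 2 / t ^ 2) := by ring
      _ = ENNReal.ofReal (∫ t in Ioi A,
            (C + ε) * ((2 * t + σ * t ^ 2) / (1 + σ * t) ^ 2 / t ^ 2)) := by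
          refine (ofReal_integral_eq_lintegral_ofReal (hTint.const_mul _) ?_).symm
          filter_upwards [ae_restrict_mem measurableSet_Ioi] with t ht
          have ht0 : 0 < t := hA0'.trans ht
          have : 0 ≤ C + ε := by linarith
          positivity
      _ = ENNReal.ofReal ((C + ε) * Tv) := by rw [integral_const_mul, hTval]
  -- lower bound on the tail part
  have hpart2l : ENNReal.ofReal ((C - ε) * Tv) ≤ ∫⁻ t in Ioi A,
      μ {ω | t < w ω} * ENNReal.ofReal ((2 * t + σ * t ^ 2) / (1 + σ * t) ^ 2) := by
    calc ENNReal.ofReal ((C - ε) * Tv)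
        = ENNReal.ofReal (∫ t in Ioi A,
            (C - ε) * ((2 * t + σ * t ^ 2) / (1 + σ * t) ^ 2 / t ^ 2)) := by
          rw [integral_const_mul, hTval]
      _ = ∫⁻ t in Ioi A,
            ENNReal.ofReal ((C - ε) * ((2 * t + σ * t ^ 2) / (1 + σ * t) ^ 2 / t ^ 2)) := by
          refine ofReal_integral_eq_lintegral_ofReal (hTint.const_mul _) ?_
          filter_upwards [ae_restrict_mem measurableSet_Ioi] with t ht
          have ht0 : 0 < t := hA0'.trans ht
          have : 0 ≤ C - ε := by linarith
          positivity
      _ ≤ ∫⁻ t in Ioi A,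
            μ {ω | t < w ω} * ENNReal.ofReal ((2 * t + σ * t ^ 2) / (1 + σ * t) ^ 2) := by
          apply setLIntegral_mono' measurableSet_Ioi (fun t ht => ?_)
          have ht0 : 0 < t := hA0'.trans ht
          have hgnn : 0 ≤ (2 * t + σ * t ^ 2) / (1 + σ * t) ^ 2 := ta_g_nonneg hσ0 ht0.le
          rw [← ENNReal.ofReal_toReal (measure_ne_top μ {ω | t < w ω}),
            ← ENNReal.ofReal_mul ENNReal.toReal_nonneg]
          apply ENNReal.ofReal_le_ofReal
          calc (C - ε) * ((2 * t + σ * t ^ 2) / (1 + σ * t) ^ 2 / t ^ 2)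
              = ((C - ε) / t ^ 2) * ((2 * t + σ * t ^ 2) / (1 + σ * t) ^ 2) := by ring
            _ ≤ F t * ((2 * t + σ * t ^ 2) / (1 + σ * t) ^ 2) :=
                mul_le_mul_of_nonneg_right (hF_lb t ht.le) hgnn
  have hsplit : J = (∫⁻ t in Ioc 0 A,
      μ {ω | t < w ω} * ENNReal.ofReal ((2 * t + σ * t ^ 2) / (1 + σ * t) ^ 2)) +
      ∫⁻ t in Ioi A,
      μ {ω | t < w ω} * ENNReal.ofReal ((2 * t + σ * t ^ 2) / (1 + σ * t) ^ 2) := by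
    rw [hJ_def, ← Ioc_union_Ioi_eq_Ioi hA0'.le,
      lintegral_union measurableSet_Ioi (Ioc_disjoint_Ioi le_rfl)]
  have hJle : J ≤ ENNReal.ofReal (A ^ 2 + (C + ε) * Tv) := by
    rw [hsplit, ENNReal.ofReal_add (by positivity) (mul_nonneg (by linarith) hTnn)]
    exact add_le_add hpart1 hpart2u
  have hJge : ENNReal.ofReal ((C - ε) * Tv) ≤ J := by
    refine le_trans hpart2l ?_
    rw [hJ_def]
    exact lintegral_mono_set (Ioi_subset_Ioi hA0'.le)
  have hJtop : J ≠ ⊤ := ne_top_of_le_ne_top ENNReal.ofReal_ne_top hJle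
  have hI : ∫ ω, (w ω) ^ 2 / (1 + σ * w ω) ∂μ = J.toReal := by
    rw [integral_eq_lintegral_of_nonneg_ae (f := fun ω => (w ω) ^ 2 / (1 + σ * w ω))
      (ae_of_all _ fun ω => by
        have := hw_nonneg ω
        positivity)
      (((hw_meas.pow_const 2).div
        (measurable_const.add (hw_meas.const_mul σ))).aestronglyMeasurable)]
    rw [hlc]
  have hIub : ∫ ω, (w ω) ^ 2 / (1 + σ * w ω) ∂μ ≤ A ^ 2 + (C + ε) * Tv := by
    rw [hI]
    exact ENNReal.toReal_le_of_le_ofReal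
      (add_nonneg (by positivity) (mul_nonneg (by linarith) hTnn)) hJle
  have hIlb : (C - ε) * Tv ≤ ∫ ω, (w ω) ^ 2 / (1 + σ * w ω) ∂μ := by
    rw [hI]
    exact (ENNReal.ofReal_le_iff_le_toReal hJtop).1 hJge
  have hdiv1 : (∫ ω, (w ω) ^ 2 / (1 + σ * w ω) ∂μ) / (-Real.log σ)
      ≤ (A ^ 2 + (C + ε) * Tv) / (-Real.log σ) := by gcongr
  have hdiv2 : ((C - ε) * Tv) / (-Real.log σ)
      ≤ (∫ ω, (w ω) ^ 2 / (1 + σ * w ω) ∂μ) / (-Real.log σ) := by gcongr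
  rw [zero_add] at h3
  rw [Real.dist_eq, abs_lt]
  constructor
  · linarith [h3, hdiv2]
  · linarith [h2, hdiv1]
end

section
/- Let w be a nonnegative real random variable and let C > 0 and α ∈ (3,4) be such that lim_{x→∞} x^{α−1} P(w > x) = C. Then E[w²] < ∞ and lim_{σ→0⁺} σ^{3−α} (E[w²/(1+σw)] − E[w²]) = C(α−1)π/sin(πα). -/
open MeasureTheory Filter Real
open scoped Topology

section AuxLemmas
open Set
open scoped ENNReal

lemma real_beta (a b : ℝ) (ha : 0 < a) (hb : 0 < b) :
    ∫ x in Set.Ioo (0:ℝ) 1, x^(a-1) * (1-x)^(b-1)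
      = Real.Gamma a * Real.Gamma b / Real.Gamma (a+b) := by
  have hab : (0:ℝ) < a + b := by linarith
  have key := Complex.Gamma_mul_Gamma_eq_betaIntegral (s := (a:ℂ)) (t := (b:ℂ))
    (by simpa using ha) (by simpa using hb)
  have h1 : Complex.betaIntegral (a:ℂ) (b:ℂ)
      = ((∫ x in (0:ℝ)..1, x^(a-1) * (1-x)^(b-1) : ℝ) : ℂ) := by
    rw [Complex.betaIntegral]
    rw [← intervalIntegral.integral_ofReal]
    apply intervalIntegral.integral_congr_ae
    refine Filter.Eventually.of_forall (fun x hx => ?_)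
    rw [Set.uIoc_of_le (by norm_num : (0:ℝ) ≤ 1)] at hx
    have hx0 : (0:ℝ) ≤ x := hx.1.le
    have hx1 : (0:ℝ) ≤ 1 - x := by linarith [hx.2]
    rw [show ((a:ℂ)-1) = ((a-1:ℝ):ℂ) by push_cast; ring,
       show ((b:ℂ)-1) = ((b-1:ℝ):ℂ) by push_cast; ring,
       show ((1:ℂ) - (x:ℂ)) = ((1-x:ℝ):ℂ) by push_cast; ring,
       ← Complex.ofReal_cpow hx0, ← Complex.ofReal_cpow hx1, ← Complex.ofReal_mul]
  have h2 : Complex.Gamma (a:ℂ) = (Real.Gamma a : ℂ) := Complex.Gamma_ofReal a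
  have h3 : Complex.Gamma (b:ℂ) = (Real.Gamma b : ℂ) := Complex.Gamma_ofReal b
  have h4 : Complex.Gamma ((a:ℂ)+(b:ℂ)) = (Real.Gamma (a+b) : ℂ) := by
    rw [← Complex.ofReal_add]; exact Complex.Gamma_ofReal (a+b)
  rw [h1, h2, h3, h4] at key
  have hΓab : Real.Gamma (a+b) ≠ 0 := Real.Gamma_ne_zero (by
    intro n; nlinarith [n.cast_nonneg (α := ℝ)])
  have : (Real.Gamma a * Real.Gamma b : ℂ)
      = ((Real.Gamma (a+b) * ∫ x in (0:ℝ)..1, x^(a-1) * (1-x)^(b-1) : ℝ) : ℂ) := by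
    push_cast; exact_mod_cast key
  have hr : Real.Gamma a * Real.Gamma b
      = Real.Gamma (a+b) * ∫ x in (0:ℝ)..1, x^(a-1) * (1-x)^(b-1) := by
    exact_mod_cast this
  rw [intervalIntegral.integral_of_le (by norm_num : (0:ℝ) ≤ 1),
      MeasureTheory.integral_Ioc_eq_integral_Ioo] at hr
  rw [eq_div_iff hΓab]
  linarith [hr]



lemma map_image : (fun y : ℝ => y/(1+y)) '' (Set.Ioi 0) = Set.Ioo 0 1 := by
  ext z
  constructor
  · rintro ⟨y, hy, rfl⟩
    have h1y : (0:ℝ) < 1 + y := by simp at hy; linarith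
    constructor
    · exact div_pos (Set.mem_Ioi.1 hy) h1y
    · rw [div_lt_one h1y]; linarith
  · rintro ⟨hz0, hz1⟩
    refine ⟨z/(1-z), ?_, ?_⟩
    · have : (0:ℝ) < 1 - z := by linarith
      exact Set.mem_Ioi.2 (by positivity)
    · have h1 : (0:ℝ) < 1 - z := by linarith
      field_simp
      ring

lemma inj_on : Set.InjOn (fun y : ℝ => y/(1+y)) (Set.Ioi 0) := by
  intro y1 h1 y2 h2 h
  simp only [Set.mem_Ioi] at h1 h2
  have e1 : (1:ℝ) + y1 ≠ 0 := by linarith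
  have e2 : (1:ℝ) + y2 ≠ 0 := by linarith
  field_simp at h
  linarith

lemma deriv_on (y : ℝ) (hy : y ∈ Set.Ioi (0:ℝ)) :
    HasDerivWithinAt (fun y : ℝ => y/(1+y)) ((1+y)^2)⁻¹ (Set.Ioi 0) y := by
  simp only [Set.mem_Ioi] at hy
  have h1y : (1:ℝ) + y ≠ 0 := by linarith
  have := (hasDerivAt_id y).div ((hasDerivAt_id y).const_add 1) h1y
  refine (this.congr_deriv ?_).hasDerivWithinAt
  simp only [id]; ring

lemma beta_Ioi (a b : ℝ) (ha : 0 < a) (hb : 0 < b) :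
    ∫ y in Set.Ioi (0:ℝ), y^(a-1) * (1+y)^(-(a+b))
      = Real.Gamma a * Real.Gamma b / Real.Gamma (a+b) := by
  rw [← real_beta a b ha hb, ← map_image,
    integral_image_eq_integral_abs_deriv_smul measurableSet_Ioi deriv_on inj_on]
  apply setIntegral_congr_fun measurableSet_Ioi
  intro y hy
  simp only [Set.mem_Ioi] at hy
  have h1y : (0:ℝ) < 1 + y := by linarith
  have hsub : 1 - y/(1+y) = (1+y)⁻¹ := by field_simp; ring
  have e1 : (y/(1+y))^(a-1) = y^(a-1) * ((1+y)^(a-1))⁻¹ := by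
    rw [Real.div_rpow hy.le h1y.le, div_eq_mul_inv]
  have e3 : |(((1+y):ℝ)^2)⁻¹| = ((1+y):ℝ)^(-2:ℝ) := by
    rw [abs_of_pos (by positivity), ← Real.rpow_natCast (1+y) 2, ← Real.rpow_neg h1y.le]
    norm_num
  simp only [smul_eq_mul]
  rw [hsub, e3, e1, Real.inv_rpow h1y.le, ← Real.rpow_neg h1y.le, ← Real.rpow_neg h1y.le,
    show (-(a+b)) = (-2:ℝ) + (-(a-1)) + (-(b-1)) by ring, Real.rpow_add h1y, Real.rpow_add h1y]
  ring



lemma integrableOn_beta (a b : ℝ) (ha : 0 < a) (hb : 0 < b) :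
    IntegrableOn (fun y : ℝ => y^(a-1) * (1+y)^(-(a+b))) (Set.Ioi 0) := by
  have hmeas : AEStronglyMeasurable (fun y : ℝ => y^(a-1) * (1+y)^(-(a+b)))
      (volume.restrict (Set.Ioi (0:ℝ))) := by
    apply Measurable.aestronglyMeasurable
    fun_prop
  rw [show Set.Ioi (0:ℝ) = Set.Ioc 0 1 ∪ Set.Ioi 1 from (Set.Ioc_union_Ioi_eq_Ioi (by norm_num)).symm]
  apply IntegrableOn.union
  · have hint : IntegrableOn (fun y : ℝ => y^(a-1)) (Set.Ioc 0 1) :=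
      (intervalIntegral.intervalIntegrable_rpow' (by linarith)).1
    apply Integrable.mono hint (hmeas.mono_measure (Measure.restrict_mono (by
      intro x hx; exact hx.1) le_rfl))
    filter_upwards [ae_restrict_mem measurableSet_Ioc] with y hy
    have hy0 : (0:ℝ) < y := hy.1
    have h1y : (1:ℝ) ≤ 1 + y := by linarith
    rw [Real.norm_eq_abs, Real.norm_eq_abs, abs_of_nonneg (by positivity),
      abs_of_nonneg (Real.rpow_nonneg hy0.le _)]
    calc y^(a-1) * (1+y)^(-(a+b)) ≤ y^(a-1) * 1 := by
          apply mul_le_mul_of_nonneg_left _ (Real.rpow_nonneg hy0.le _)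
          exact Real.rpow_le_one_of_one_le_of_nonpos h1y (by linarith)
      _ = y^(a-1) := mul_one _
  · have hint : IntegrableOn (fun y : ℝ => y^(-b-1)) (Set.Ioi 1) :=
      integrableOn_Ioi_rpow_of_lt (by linarith) (by norm_num)
    apply Integrable.mono hint (hmeas.mono_measure (Measure.restrict_mono (by
      intro x hx; exact lt_trans (by norm_num : (0:ℝ) < 1) hx) le_rfl))
    filter_upwards [ae_restrict_mem measurableSet_Ioi] with y hy
    have hy0 : (0:ℝ) < y := lt_trans (by norm_num) hy
    rw [Real.norm_eq_abs, Real.norm_eq_abs, abs_of_nonneg (by positivity),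
      abs_of_nonneg (Real.rpow_nonneg hy0.le _)]
    calc y^(a-1) * (1+y)^(-(a+b)) ≤ y^(a-1) * y^(-(a+b)) := by
          apply mul_le_mul_of_nonneg_left _ (Real.rpow_nonneg hy0.le _)
          exact Real.rpow_le_rpow_of_nonpos hy0 (by linarith) (by linarith)
      _ = y^(-b-1) := by rw [← Real.rpow_add hy0]; ring_nf

lemma target_integrand_eq {α : ℝ} (hα : α ∈ Set.Ioo (3:ℝ) 4) :
    ∀ y ∈ Set.Ioi (0:ℝ), y^(3-α)*(3+2*y)/(1+y)^2
      = 3*(y^((4-α)-1) * (1+y)^(-((4-α)+(α-2)))) + 2*(y^((5-α)-1) * (1+y)^(-((5-α)+(α-3)))) := by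
  intro y hy
  simp only [Set.mem_Ioi] at hy
  have h1y : (0:ℝ) < 1 + y := by linarith
  have e2 : ((1+y):ℝ)^(-((4-α)+(α-2))) = (((1+y):ℝ)^2)⁻¹ := by
    rw [show -((4-α)+(α-2)) = (-2:ℝ) by ring, ← Real.rpow_natCast (1+y) 2,
      ← Real.rpow_neg h1y.le]
    norm_num
  have e3 : ((1+y):ℝ)^(-((5-α)+(α-3))) = (((1+y):ℝ)^2)⁻¹ := by
    rw [show -((5-α)+(α-3)) = (-2:ℝ) by ring, ← Real.rpow_natCast (1+y) 2,
      ← Real.rpow_neg h1y.le]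
    norm_num
  have e4 : y^((5-α)-1) = y^(3-α) * y := by
    rw [show (5-α)-1 = (3-α)+1 by ring, Real.rpow_add hy, Real.rpow_one]
  rw [e2, e3, e4, show (4-α)-1 = 3-α by ring]
  field_simp

lemma target_value {α : ℝ} (hα : α ∈ Set.Ioo (3:ℝ) 4) :
    ∫ y in Set.Ioi (0:ℝ), y^(3-α)*(3+2*y)/(1+y)^2
      = -((α-1) * Real.pi / Real.sin (Real.pi * α)) := by
  obtain ⟨hα3, hα4⟩ := hα
  have h1 : (0:ℝ) < 4 - α := by linarith
  have h2 : (0:ℝ) < α - 2 := by linarith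
  have h3 : (0:ℝ) < 5 - α := by linarith
  have h4 : (0:ℝ) < α - 3 := by linarith
  rw [setIntegral_congr_fun measurableSet_Ioi (target_integrand_eq ⟨hα3, hα4⟩)]
  rw [integral_add (((integrableOn_beta _ _ h1 h2).const_mul 3))
      (((integrableOn_beta _ _ h3 h4).const_mul 2)),
    integral_const_mul, integral_const_mul, beta_Ioi _ _ h1 h2, beta_Ioi _ _ h3 h4]
  rw [show (4-α)+(α-2) = (2:ℝ) by ring, show (5-α)+(α-3) = (2:ℝ) by ring, Real.Gamma_two]
  rw [show (α-2) = (α-3)+1 by ring, Real.Gamma_add_one h4.ne']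
  rw [show (5-α) = (4-α)+1 by ring, Real.Gamma_add_one h1.ne']
  have hrefl : Real.Gamma (α-3) * Real.Gamma (1-(α-3)) = π / Real.sin (π * (α-3)) :=
    Real.Gamma_mul_Gamma_one_sub (α-3)
  rw [show (4-α) = 1-(α-3) by ring] at *
  have hsin : Real.sin (π * (α-3)) = - Real.sin (π * α) := by
    rw [show π * (α-3) = (π * α - π) - 2*π by ring, Real.sin_sub_two_pi, Real.sin_sub_pi]
  have hsinneg : Real.sin (π * α) < 0 := by
    have : Real.sin (π * α) = Real.sin ((π * α - 2*π) - 2*π) := by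
      rw [Real.sin_sub_two_pi, Real.sin_sub_two_pi]
    rw [this]
    apply Real.sin_neg_of_neg_of_neg_pi_lt
    · nlinarith [Real.pi_pos]
    · nlinarith [Real.pi_pos]
  rw [hsin] at hrefl
  have hsne : Real.sin (π * α) ≠ 0 := hsinneg.ne
  calc 3 * (Real.Gamma (1-(α-3)) * ((α-3) * Real.Gamma (α-3)) / 1)
        + 2 * ((1-(α-3)) * Real.Gamma (1-(α-3)) * Real.Gamma (α-3) / 1)
      = (α-1) * (Real.Gamma (α-3) * Real.Gamma (1-(α-3))) := by ring
    _ = (α-1) * (π / (- Real.sin (π * α))) := by rw [hrefl]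
    _ = -((α-1) * π / Real.sin (π * α)) := by rw [div_neg]; ring



section
variable {Ω : Type*} [MeasurableSpace Ω] (μ : Measure Ω) [IsProbabilityMeasure μ]
  {w : Ω → ℝ}

lemma tail_antitone (w : Ω → ℝ) :
    Antitone (fun x : ℝ => (μ {ω | x < w ω}).toReal) := by
  intro x y hxy
  apply ENNReal.toReal_mono (measure_ne_top μ _)
  exact measure_mono (fun ω hω => lt_of_le_of_lt hxy hω)

lemma tail_measurable (w : Ω → ℝ) :
    Measurable (fun x : ℝ => (μ {ω | x < w ω}).toReal) :=
  (tail_antitone μ w).measurable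

lemma tail_le_one (w : Ω → ℝ) (x : ℝ) : (μ {ω | x < w ω}).toReal ≤ 1 := by
  rw [show (1:ℝ) = (μ Set.univ).toReal by simp]
  exact ENNReal.toReal_mono (measure_ne_top μ _) (measure_mono (Set.subset_univ _))

/-- Real-valued layer cake formula. -/
lemma layercake_real (hw_meas : Measurable w) (hw_nonneg : ∀ ω, 0 ≤ w ω)
    {g G : ℝ → ℝ} (g_cont : Continuous g) (g_nn : ∀ t, 0 ≤ t → 0 ≤ g t)
    (hG : ∀ u, 0 ≤ u → (∫ t in (0:ℝ)..u, g t) = G u)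
    (hG_nn : ∀ u, 0 ≤ u → 0 ≤ G u)
    (hint : Integrable (fun ω => G (w ω)) μ) :
    ∫ ω, G (w ω) ∂μ = ∫ t in Set.Ioi (0:ℝ), g t * (μ {ω | t < w ω}).toReal := by
  have key := lintegral_comp_eq_lintegral_meas_lt_mul μ (f := w) (g := g)
    (ae_of_all _ hw_nonneg) hw_meas.aemeasurable
    (fun t _ => g_cont.intervalIntegrable 0 t)
    (ae_restrict_of_forall_mem measurableSet_Ioi (fun t ht => g_nn t (le_of_lt ht)))
  have hGw_nn : 0 ≤ᵐ[μ] fun ω => G (w ω) := ae_of_all _ (fun ω => hG_nn _ (hw_nonneg ω))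
  have hL : ∫⁻ ω, ENNReal.ofReal (∫ t in (0:ℝ)..w ω, g t) ∂μ
      = ENNReal.ofReal (∫ ω, G (w ω) ∂μ) := by
    have h0 : ∫⁻ ω, ENNReal.ofReal (∫ t in (0:ℝ)..w ω, g t) ∂μ
        = ∫⁻ ω, ENNReal.ofReal (G (w ω)) ∂μ :=
      lintegral_congr_ae (ae_of_all _ (fun ω => by simp only []; rw [hG _ (hw_nonneg ω)]))
    rw [h0, ← MeasureTheory.ofReal_integral_eq_lintegral_ofReal hint hGw_nn]
  have hR : ∫ t in Set.Ioi (0:ℝ), g t * (μ {ω | t < w ω}).toReal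
      = (∫⁻ t in Set.Ioi 0, μ {ω | t < w ω} * ENNReal.ofReal (g t)).toReal := by
    rw [MeasureTheory.integral_eq_lintegral_of_nonneg_ae
      (ae_restrict_of_forall_mem measurableSet_Ioi
        (fun t ht => mul_nonneg (g_nn t (le_of_lt ht)) ENNReal.toReal_nonneg))
      ((g_cont.measurable.mul (tail_measurable μ w)).aestronglyMeasurable)]
    congr 1
    apply setLIntegral_congr_fun measurableSet_Ioi
    intro t ht
    dsimp only
    rw [ENNReal.ofReal_mul (g_nn t (le_of_lt ht)),
      ENNReal.ofReal_toReal (measure_ne_top μ _), mul_comm]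
  rw [hR, ← key, hL, ENNReal.toReal_ofReal (integral_nonneg (fun ω => hG_nn _ (hw_nonneg ω)))]

/-- Second moment is finite under the tail bound. -/
lemma integrable_sq (hw_meas : Measurable w) (hw_nonneg : ∀ ω, 0 ≤ w ω)
    {x₀ K α : ℝ} (hx₀ : 1 ≤ x₀) (hK : 0 ≤ K) (hα : 3 < α)
    (hbound : ∀ x, x₀ ≤ x → (μ {ω | x < w ω}).toReal ≤ K * x^(1-α)) :
    Integrable (fun ω => (w ω)^2) μ := by
  have hx₀0 : (0:ℝ) < x₀ := lt_of_lt_of_le one_pos hx₀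
  constructor
  · exact ((hw_meas.pow_const 2).aestronglyMeasurable)
  rw [hasFiniteIntegral_iff_ofReal (ae_of_all _ (fun ω => sq_nonneg _))]
  have key := lintegral_comp_eq_lintegral_meas_lt_mul μ (f := w) (g := fun t => 2*t)
    (ae_of_all _ hw_nonneg) hw_meas.aemeasurable
    (fun t _ => (continuous_const.mul continuous_id).intervalIntegrable 0 t)
    (ae_restrict_of_forall_mem measurableSet_Ioi (fun t ht => by have := Set.mem_Ioi.1 ht; positivity))
  have h2 : ∀ ω, (∫ t in (0:ℝ)..w ω, 2*t) = (w ω)^2 := by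
    intro ω
    rw [intervalIntegral.integral_const_mul, integral_id]
    ring
  simp_rw [h2] at key
  rw [key]
  rw [show Set.Ioi (0:ℝ) = Set.Ioc 0 x₀ ∪ Set.Ioi x₀ from
    (Set.Ioc_union_Ioi_eq_Ioi hx₀0.le).symm,
    lintegral_union measurableSet_Ioi Set.Ioc_disjoint_Ioi_same]
  apply ENNReal.add_lt_top.2
  constructor
  · calc ∫⁻ t in Set.Ioc 0 x₀, μ {ω | t < w ω} * ENNReal.ofReal (2*t)
        ≤ ∫⁻ _ in Set.Ioc 0 x₀, ENNReal.ofReal (2*x₀) := by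
          apply setLIntegral_mono measurable_const
          intro t ht
          calc μ {ω | t < w ω} * ENNReal.ofReal (2*t)
              ≤ 1 * ENNReal.ofReal (2*x₀) :=
                mul_le_mul' prob_le_one (ENNReal.ofReal_le_ofReal (by linarith [ht.2]))
            _ = ENNReal.ofReal (2*x₀) := one_mul _
      _ = ENNReal.ofReal (2*x₀) * volume (Set.Ioc (0:ℝ) x₀) := setLIntegral_const _ _
      _ < ⊤ := by
          apply ENNReal.mul_lt_top ENNReal.ofReal_lt_top
          simp [Real.volume_Ioc]
  · have hintb : IntegrableOn (fun t : ℝ => 2*K * t^(2-α)) (Set.Ioi x₀) :=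
      (integrableOn_Ioi_rpow_of_lt (by linarith) hx₀0).const_mul (2*K)
    calc ∫⁻ t in Set.Ioi x₀, μ {ω | t < w ω} * ENNReal.ofReal (2*t)
        ≤ ∫⁻ t in Set.Ioi x₀, ENNReal.ofReal (2*K * t^(2-α)) := by
          apply setLIntegral_mono (by fun_prop)
          intro t ht
          have ht0 : (0:ℝ) < t := lt_of_lt_of_le hx₀0 (le_of_lt ht)
          have hμ : μ {ω | t < w ω} ≤ ENNReal.ofReal (K * t^(1-α)) := by
            rw [← ENNReal.ofReal_toReal (measure_ne_top μ {ω | t < w ω})]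
            exact ENNReal.ofReal_le_ofReal (hbound t (le_of_lt ht))
          calc μ {ω | t < w ω} * ENNReal.ofReal (2*t)
              ≤ ENNReal.ofReal (K * t^(1-α)) * ENNReal.ofReal (2*t) :=
                mul_le_mul' hμ le_rfl
            _ = ENNReal.ofReal (K * t^(1-α) * (2*t)) := by
                rw [← ENNReal.ofReal_mul (by positivity)]
            _ = ENNReal.ofReal (2*K * t^(2-α)) := by
                congr 1
                rw [show (2-α) = (1-α) + 1 by ring, Real.rpow_add ht0, Real.rpow_one]
                ring
      _ < ⊤ := hintb.lintegral_lt_top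



lemma alg_sigma_sq {σ y α : ℝ} (hσ : 0 < σ) : σ^(3-α) * (y/σ)^2 = y^2 * σ^(1-α) := by
  have h2 : ((σ:ℝ)^2) = σ^((2:ℝ)) := by
    rw [show ((2:ℝ)) = ((2:ℕ):ℝ) by norm_num, Real.rpow_natCast]
  have key : σ^(1-α) * σ^2 = σ^(3-α) := by
    rw [h2, ← Real.rpow_add hσ, show (1:ℝ)-α+2 = 3-α by ring]
  calc σ^(3-α)*(y/σ)^2 = (σ^(1-α)*σ^2)*(y/σ)^2 := by rw [key]
    _ = σ^(1-α) * ((y/σ)*σ)^2 := by ring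
    _ = σ^(1-α) * y^2 := by rw [div_mul_cancel₀ y hσ.ne']
    _ = y^2 * σ^(1-α) := mul_comm _ _

lemma alg_sigma_tail {σ y α : ℝ} (hσ : 0 < σ) (hy : 0 < y) :
    σ^(1-α) = y^(1-α) * (y/σ)^(α-1) := by
  rw [Real.div_rpow hy.le hσ.le, div_eq_mul_inv, ← Real.rpow_neg hσ.le,
    ← mul_assoc, ← Real.rpow_add hy]
  norm_num

lemma alg_y_pow {y α : ℝ} (hy : 0 < y) : y^(1-α) * y^2 = y^(3-α) := by
  have h2 : ((y:ℝ)^2) = y^((2:ℝ)) := by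
    rw [show ((2:ℝ)) = ((2:ℕ):ℝ) by norm_num, Real.rpow_natCast]
  rw [h2, show (3:ℝ)-α = (1-α)+2 by ring, Real.rpow_add hy]

lemma dom_bound {α K x₀ : ℝ} (hα3 : 3 < α) (hK : 1 ≤ K) (hx₀ : 1 ≤ x₀)
    {T : ℝ → ℝ} (hT0 : ∀ x, 0 ≤ T x) (hT1 : ∀ x, T x ≤ 1)
    (hTb : ∀ x, x₀ ≤ x → T x ≤ K * x^(1-α)) {σ y : ℝ} (hσ : 0 < σ) (hy : 0 < y) :
    σ^(1-α) * T (y/σ) ≤ (K * x₀^(α-1)) * y^(1-α) := by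
  have hx₀0 : (0:ℝ) < x₀ := lt_of_lt_of_le one_pos hx₀
  have hu : 0 < y/σ := div_pos hy hσ
  have hx₀p : (1:ℝ) ≤ x₀^(α-1) := Real.one_le_rpow hx₀ (by linarith)
  have hyp : (0:ℝ) ≤ y^(1-α) := Real.rpow_nonneg hy.le _
  rcases le_or_gt x₀ (y/σ) with h | h
  · have h1 : T (y/σ) ≤ K * (y/σ)^(1-α) := hTb _ h
    have h2 : σ^(1-α) * T (y/σ) ≤ σ^(1-α) * (K * (y/σ)^(1-α)) :=
      mul_le_mul_of_nonneg_left h1 (Real.rpow_nonneg hσ.le _)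
    have h3 : σ^(1-α) * (K * (y/σ)^(1-α)) = K * y^(1-α) := by
      rw [Real.div_rpow hy.le hσ.le, div_eq_mul_inv, ← Real.rpow_neg hσ.le]
      rw [mul_comm (σ^(1-α)), mul_assoc, mul_assoc, ← Real.rpow_add hσ]
      norm_num
    rw [h3] at h2
    calc σ^(1-α) * T (y/σ) ≤ K * y^(1-α) := h2
      _ ≤ (K * x₀^(α-1)) * y^(1-α) := by
        nlinarith [mul_nonneg (mul_nonneg (by linarith : (0:ℝ) ≤ K) hyp)
          (by linarith : (0:ℝ) ≤ x₀^(α-1) - 1)]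
  · have hyx : y/x₀ ≤ σ := by
      rw [div_le_iff₀ hx₀0]
      rw [div_lt_iff₀ hσ] at h
      nlinarith
    have h1 : σ^(1-α) ≤ (y/x₀)^(1-α) :=
      Real.rpow_le_rpow_of_nonpos (div_pos hy hx₀0) hyx (by linarith)
    have h2 : ((y/x₀):ℝ)^(1-α) = y^(1-α) * x₀^(α-1) := by
      rw [Real.div_rpow hy.le hx₀0.le, div_eq_mul_inv, ← Real.rpow_neg hx₀0.le]
      norm_num
    calc σ^(1-α) * T (y/σ) ≤ σ^(1-α) * 1 :=
          mul_le_mul_of_nonneg_left (hT1 _) (Real.rpow_nonneg hσ.le _)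
      _ = σ^(1-α) := mul_one _
      _ ≤ y^(1-α) * x₀^(α-1) := h2 ▸ h1
      _ ≤ (K * x₀^(α-1)) * y^(1-α) := by
        nlinarith [mul_nonneg (mul_nonneg (by linarith : (0:ℝ) ≤ K - 1)
          (Real.rpow_nonneg hx₀0.le (α-1))) hyp]

end

end AuxLemmas

/-- Let `w ≥ 0` with tail `P(w > x) ~ C x^{-(α-1)}` for some `C > 0`
and `α ∈ (3,4)`. Then `E[w²] < ∞` and
`σ^{3−α}(E[w²/(1+σw)] − E[w²]) → C(α−1)π/sin(πα)` as `σ → 0⁺`. -/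
theorem tail_asymptotics_alpha_three_four
    {Ω : Type*} [MeasurableSpace Ω] (μ : Measure Ω) [IsProbabilityMeasure μ]
    (w : Ω → ℝ) (hw_meas : Measurable w) (hw_nonneg : ∀ ω, 0 ≤ w ω)
    (C α : ℝ) (hC : 0 < C) (hα : α ∈ Set.Ioo (3 : ℝ) 4)
    (htail : Tendsto (fun x : ℝ => x ^ (α - 1) * (μ {ω | x < w ω}).toReal)
      atTop (𝓝 C)) :
    Integrable (fun ω => (w ω) ^ 2) μ ∧
    Tendsto (fun σ : ℝ =>
        σ ^ (3 - α) * ((∫ ω, (w ω) ^ 2 / (1 + σ * w ω) ∂μ) - ∫ ω, (w ω) ^ 2 ∂μ))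
      (𝓝[>] 0) (𝓝 (C * (α - 1) * Real.pi / Real.sin (Real.pi * α))) := by
  obtain ⟨hα3, hα4⟩ := hα
  -- tail bound setup
  have hev : ∀ᶠ x in atTop, x^(α-1) * (μ {ω | x < w ω}).toReal ≤ C + 1 :=
    htail.eventually (eventually_le_nhds (by linarith))
  obtain ⟨x₁, hx₁⟩ := eventually_atTop.1 hev
  set x₀ : ℝ := max x₁ 1 with hx₀def
  have hx₀1 : (1:ℝ) ≤ x₀ := le_max_right _ _
  have hx₀0 : (0:ℝ) < x₀ := lt_of_lt_of_le one_pos hx₀1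
  have hTb : ∀ x, x₀ ≤ x → (μ {ω | x < w ω}).toReal ≤ (C+1) * x^(1-α) := by
    intro x hx
    have hx1 : (1:ℝ) ≤ x := le_trans hx₀1 hx
    have hx0 : (0:ℝ) < x := lt_of_lt_of_le one_pos hx1
    have h := hx₁ x (le_trans (le_max_left _ _) hx)
    have hp : (0:ℝ) < x^(α-1) := Real.rpow_pos_of_pos hx0 _
    have h2 : (μ {ω | x < w ω}).toReal ≤ (C+1) / x^(α-1) := by
      rw [le_div_iff₀ hp]
      rw [mul_comm] at h
      exact h
    calc (μ {ω | x < w ω}).toReal ≤ (C+1) / x^(α-1) := h2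
      _ = (C+1) * x^(1-α) := by
          rw [div_eq_mul_inv, ← Real.rpow_neg hx0.le, show -(α-1) = 1-α by ring]
  have hI2 : Integrable (fun ω => (w ω)^2) μ :=
    integrable_sq μ hw_meas hw_nonneg hx₀1 (by linarith : (0:ℝ) ≤ C+1) hα3 hTb
  refine ⟨hI2, ?_⟩
  have hTm := tail_measurable μ w
  have hT1 := tail_le_one μ w
  -- the dominated convergence step
  have hbint : IntegrableOn
      (fun y : ℝ => ((C+1) * x₀^(α-1)) * (y^(3-α)*(3+2*y)/(1+y)^2)) (Set.Ioi 0) := by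
    have hb0 : IntegrableOn (fun y : ℝ => y^(3-α)*(3+2*y)/(1+y)^2) (Set.Ioi 0) :=
      IntegrableOn.congr_fun
        (((integrableOn_beta (4-α) (α-2) (by linarith) (by linarith)).const_mul 3).add
          ((integrableOn_beta (5-α) (α-3) (by linarith) (by linarith)).const_mul 2))
        (fun y hy => (target_integrand_eq ⟨hα3, hα4⟩ y hy).symm) measurableSet_Ioi
    exact hb0.const_mul _
  have hDCT : Tendsto (fun σ : ℝ => ∫ y in Set.Ioi (0:ℝ),
        σ^(3-α) * ((σ⁻¹*y)^2*(3+2*(σ*(σ⁻¹*y)))/(1+σ*(σ⁻¹*y))^2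
          * (μ {ω | σ⁻¹*y < w ω}).toReal))
      (𝓝[>] (0:ℝ))
      (𝓝 (∫ y in Set.Ioi (0:ℝ), C * (y^(3-α)*(3+2*y)/(1+y)^2))) := by
    apply tendsto_integral_filter_of_dominated_convergence
      (bound := fun y : ℝ => ((C+1) * x₀^(α-1)) * (y^(3-α)*(3+2*y)/(1+y)^2))
    · -- measurability
      apply Filter.Eventually.of_forall
      intro σ
      apply Measurable.aestronglyMeasurable
      apply Measurable.const_mul
      apply Measurable.mul
      · fun_prop
      · exact hTm.comp (measurable_id.const_mul σ⁻¹)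
    · -- domination
      filter_upwards [self_mem_nhdsWithin] with σ hσ
      apply ae_restrict_of_forall_mem measurableSet_Ioi
      intro y hy
      have hσ0 : (0:ℝ) < σ := hσ
      have hy0 : (0:ℝ) < y := hy
      have hd : σ⁻¹ * y = y / σ := inv_mul_eq_div σ y
      have hyσ : σ * (y/σ) = y := by field_simp
      have hTnn : (0:ℝ) ≤ (μ {ω | y/σ < w ω}).toReal := ENNReal.toReal_nonneg
      rw [hd, hyσ, Real.norm_eq_abs, abs_of_nonneg (by positivity)]
      have hdb := dom_bound hα3 (by linarith : (1:ℝ) ≤ C+1) hx₀1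
        (fun x => ENNReal.toReal_nonneg) hT1 hTb hσ0 hy0
      calc σ^(3-α) * ((y/σ)^2*(3+2*y)/(1+y)^2 * (μ {ω | y/σ < w ω}).toReal)
          = ((3+2*y)/(1+y)^2) * (σ^(3-α)*(y/σ)^2) * (μ {ω | y/σ < w ω}).toReal := by
            ring
        _ = (y^2*((3+2*y)/(1+y)^2)) * (σ^(1-α) * (μ {ω | y/σ < w ω}).toReal) := by
            rw [alg_sigma_sq hσ0]; ring
        _ ≤ (y^2*((3+2*y)/(1+y)^2)) * (((C+1) * x₀^(α-1)) * y^(1-α)) := by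
            apply mul_le_mul_of_nonneg_left hdb (by positivity)
        _ = ((C+1) * x₀^(α-1)) * ((y^(1-α)*y^2)*(3+2*y)/(1+y)^2) := by ring
        _ = ((C+1) * x₀^(α-1)) * (y^(3-α)*(3+2*y)/(1+y)^2) := by
            rw [alg_y_pow hy0]
    · exact hbint
    · -- pointwise limit
      apply ae_restrict_of_forall_mem measurableSet_Ioi
      intro y hy
      have hy0 : (0:ℝ) < y := hy
      have hdiv : Tendsto (fun σ : ℝ => y / σ) (𝓝[>] (0:ℝ)) atTop := by
        simp_rw [div_eq_mul_inv]
        exact Tendsto.const_mul_atTop hy0 tendsto_inv_nhdsGT_zero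
      have hcomp : Tendsto (fun σ : ℝ =>
          (y/σ)^(α-1) * (μ {ω | y/σ < w ω}).toReal) (𝓝[>] (0:ℝ)) (𝓝 C) :=
        htail.comp hdiv
      have hlim := hcomp.const_mul (y^(1-α)*y^2*(3+2*y)/(1+y)^2)
      have hval : (y^(1-α)*y^2*(3+2*y)/(1+y)^2) * C
          = C * (y^(3-α)*(3+2*y)/(1+y)^2) := by
        rw [show y^(1-α)*y^2*(3+2*y)/(1+y)^2 = (y^(1-α)*y^2)*(3+2*y)/(1+y)^2 by ring,
          alg_y_pow hy0]
        ring
      rw [hval] at hlim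
      apply hlim.congr'
      filter_upwards [self_mem_nhdsWithin] with σ hσ
      have hσ0 : (0:ℝ) < σ := hσ
      have hd : σ⁻¹ * y = y / σ := inv_mul_eq_div σ y
      have hyσ : σ * (y/σ) = y := by field_simp
      have e3 : σ^(3-α)*(y/σ)^2 = (y^(1-α)*y^2)*((y/σ)^(α-1)) := by
        rw [alg_sigma_sq hσ0, alg_sigma_tail hσ0 hy0]; ring
      rw [hd, hyσ]
      calc (y^(1-α)*y^2*(3+2*y)/(1+y)^2) * ((y/σ)^(α-1) * (μ {ω | y/σ < w ω}).toReal)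
          = ((y^(1-α)*y^2)*((y/σ)^(α-1))) * ((3+2*y)/(1+y)^2 * (μ {ω | y/σ < w ω}).toReal) := by
            ring
        _ = (σ^(3-α)*(y/σ)^2) * ((3+2*y)/(1+y)^2 * (μ {ω | y/σ < w ω}).toReal) := by
            rw [e3]
        _ = σ^(3-α) * ((y/σ)^2*(3+2*y)/(1+y)^2 * (μ {ω | y/σ < w ω}).toReal) := by
            ring
  -- identification of the prelimit expression
  have key_eq : ∀ σ : ℝ, 0 < σ →
      σ ^ (3 - α) * ((∫ ω, (w ω)^2 / (1 + σ * w ω) ∂μ) - ∫ ω, (w ω)^2 ∂μ)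
      = -(∫ y in Set.Ioi (0:ℝ),
          σ^(3-α) * ((σ⁻¹*y)^2*(3+2*(σ*(σ⁻¹*y)))/(1+σ*(σ⁻¹*y))^2
            * (μ {ω | σ⁻¹*y < w ω}).toReal)) := by
    intro σ hσ0
    have hden : ∀ ω, (0:ℝ) < 1 + σ * w ω := fun ω => by
      nlinarith [mul_nonneg hσ0.le (hw_nonneg ω)]
    have hIa : Integrable (fun ω => (w ω)^2/(1+σ*w ω)) μ := by
      apply hI2.mono
      · exact ((hw_meas.pow_const 2).div
          (measurable_const.add (measurable_const.mul hw_meas))).aestronglyMeasurable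
      · apply ae_of_all
        intro ω
        have h1 : (0:ℝ) ≤ (w ω)^2/(1+σ*w ω) := div_nonneg (sq_nonneg _) (hden ω).le
        rw [Real.norm_eq_abs, Real.norm_eq_abs, abs_of_nonneg h1, abs_of_nonneg (sq_nonneg _)]
        apply div_le_self (sq_nonneg _)
        nlinarith [mul_nonneg hσ0.le (hw_nonneg ω)]
    have hIb : Integrable (fun ω => (w ω)^3/(1+σ*w ω)) μ := by
      apply (hI2.const_mul σ⁻¹).mono
      · exact ((hw_meas.pow_const 3).div
          (measurable_const.add (measurable_const.mul hw_meas))).aestronglyMeasurable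
      · apply ae_of_all
        intro ω
        have h1 : (0:ℝ) ≤ (w ω)^3/(1+σ*w ω) :=
          div_nonneg (pow_nonneg (hw_nonneg ω) 3) (hden ω).le
        have hss : σ⁻¹*σ = 1 := inv_mul_cancel₀ hσ0.ne'
        have hb : (w ω)^3/(1+σ*w ω) ≤ σ⁻¹*(w ω)^2 := by
          rw [div_le_iff₀ (hden ω)]
          have expand : σ⁻¹*(w ω)^2*(1+σ*w ω) = σ⁻¹*(w ω)^2 + (σ⁻¹*σ)*(w ω)^3 := by ring
          rw [expand, hss, one_mul]
          nlinarith [mul_nonneg (inv_pos.2 hσ0).le (sq_nonneg (w ω))]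
        rw [Real.norm_eq_abs, Real.norm_eq_abs, abs_of_nonneg h1]
        exact le_trans hb (le_abs_self _)
    have hsub : (∫ ω, (w ω)^2/(1+σ*w ω) ∂μ) - ∫ ω, (w ω)^2 ∂μ
        = -(σ * ∫ ω, (w ω)^3/(1+σ*w ω) ∂μ) := by
      rw [← integral_sub hIa hI2, ← integral_const_mul, ← integral_neg]
      apply integral_congr_ae
      apply ae_of_all
      intro ω
      have h := (hden ω).ne'
      dsimp only
      rw [div_sub' h, mul_div_assoc', neg_div']
      congr 1
      ring
    have hlc : ∫ ω, (w ω)^3/(1+σ*w ω) ∂μ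
        = ∫ t in Set.Ioi (0:ℝ), (t^2*(3+2*σ*t)/(1+σ*t)^2) * (μ {ω | t < w ω}).toReal := by
      have hmnn : ∀ t : ℝ, (0:ℝ) ≤ max t 0 := fun t => le_max_right _ _
      have hdnn : ∀ t : ℝ, (0:ℝ) < 1 + σ * max t 0 := fun t => by
        nlinarith [mul_nonneg hσ0.le (hmnn t)]
      have gcont : Continuous (fun t : ℝ =>
          (max t 0)^2*(3+2*σ*(max t 0))/(1+σ*(max t 0))^2) := by
        apply Continuous.div
        · fun_prop
        · fun_prop
        · intro t
          exact pow_ne_zero 2 (hdnn t).ne'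
      have key := layercake_real μ hw_meas hw_nonneg
        (g := fun t : ℝ => (max t 0)^2*(3+2*σ*(max t 0))/(1+σ*(max t 0))^2)
        (G := fun u : ℝ => u^3/(1+σ*u)) gcont
        (fun t _ => div_nonneg (mul_nonneg (sq_nonneg _)
          (by nlinarith [mul_nonneg hσ0.le (hmnn t)])) (sq_nonneg _))
        ?_ (fun u hu => div_nonneg (pow_nonneg hu 3)
          (by nlinarith [mul_nonneg hσ0.le hu] : (0:ℝ) ≤ 1+σ*u))
        hIb
      · rw [key]
        apply setIntegral_congr_fun measurableSet_Ioi
        intro t ht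
        have ht0 : (0:ℝ) ≤ t := (Set.mem_Ioi.1 ht).le
        simp only [max_eq_left ht0]
      · -- FTC
        intro u hu
        have hcongr : Set.EqOn
            (fun t : ℝ => (max t 0)^2*(3+2*σ*(max t 0))/(1+σ*(max t 0))^2)
            (fun t : ℝ => t^2*(3+2*σ*t)/(1+σ*t)^2) (Set.uIcc 0 u) := by
          intro t ht
          rw [Set.uIcc_of_le hu] at ht
          simp only [max_eq_left ht.1]
        rw [intervalIntegral.integral_congr hcongr]
        have hd : ∀ t ∈ Set.uIcc (0:ℝ) u,
            HasDerivAt (fun z : ℝ => z^3/(1+σ*z)) (t^2*(3+2*σ*t)/(1+σ*t)^2) t := by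
          intro t ht
          rw [Set.uIcc_of_le hu] at ht
          have ht0 : (0:ℝ) ≤ t := ht.1
          have hdt : (0:ℝ) < 1+σ*t := by nlinarith [mul_nonneg hσ0.le ht0]
          have h1 : HasDerivAt (fun z : ℝ => z^3) (3*t^2) t := by
            simpa using hasDerivAt_pow 3 t
          have h2 : HasDerivAt (fun z : ℝ => 1+σ*z) σ t := by
            simpa using ((hasDerivAt_id t).const_mul σ).const_add 1
          have h3 := h1.div h2 hdt.ne'
          refine h3.congr_deriv ?_
          ring
        have hcont : IntervalIntegrable (fun t : ℝ => t^2*(3+2*σ*t)/(1+σ*t)^2) volume 0 u := by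
          apply ContinuousOn.intervalIntegrable
          apply ContinuousOn.div
          · fun_prop
          · fun_prop
          · intro t ht
            rw [Set.uIcc_of_le hu] at ht
            have : (0:ℝ) < 1+σ*t := by nlinarith [mul_nonneg hσ0.le ht.1]
            exact pow_ne_zero 2 this.ne'
        rw [intervalIntegral.integral_eq_sub_of_hasDerivAt hd hcont]
        norm_num
    have hcv : ∫ t in Set.Ioi (0:ℝ), (t^2*(3+2*σ*t)/(1+σ*t)^2) * (μ {ω | t < w ω}).toReal
        = σ⁻¹ * ∫ y in Set.Ioi (0:ℝ),
            ((σ⁻¹*y)^2*(3+2*(σ*(σ⁻¹*y)))/(1+σ*(σ⁻¹*y))^2 * (μ {ω | σ⁻¹*y < w ω}).toReal) := by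
      have hcc := integral_comp_mul_left_Ioi
        (fun t => (t^2*(3+2*σ*t)/(1+σ*t)^2) * (μ {ω | t < w ω}).toReal) 0 (inv_pos.2 hσ0)
      rw [mul_zero, inv_inv, smul_eq_mul] at hcc
      rw [show (fun y : ℝ => ((σ⁻¹*y)^2*(3+2*(σ*(σ⁻¹*y)))/(1+σ*(σ⁻¹*y))^2
            * (μ {ω | σ⁻¹*y < w ω}).toReal))
          = (fun y : ℝ => ((σ⁻¹*y)^2*(3+2*σ*(σ⁻¹*y))/(1+σ*(σ⁻¹*y))^2
            * (μ {ω | σ⁻¹*y < w ω}).toReal)) from by funext y; ring_nf]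
      rw [hcc, ← mul_assoc, inv_mul_cancel₀ hσ0.ne', one_mul]
    rw [hsub, hlc, hcv, ← mul_assoc σ σ⁻¹, mul_inv_cancel₀ hσ0.ne', one_mul,
      mul_neg, ← integral_const_mul]
  -- final assembly
  have hval : -(∫ y in Set.Ioi (0:ℝ), C * (y^(3-α)*(3+2*y)/(1+y)^2))
      = C * (α - 1) * Real.pi / Real.sin (Real.pi * α) := by
    rw [integral_const_mul, target_value ⟨hα3, hα4⟩]
    ring
  have hfinal := hDCT.neg
  rw [hval] at hfinal
  apply hfinal.congr'
  filter_upwards [self_mem_nhdsWithin] with σ hσ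
  exact (key_eq σ hσ).symm
end

section
/- Let w be a nonnegative real random variable and let C > 0 be such that lim_{x→∞} x³ P(w > x) = C (i.e. the tail exponent is α = 4). Then E[w²] < ∞ and lim_{σ→0⁺} (E[w²/(1+σw)] − E[w²]) / (σ log σ) = 3C. -/
open MeasureTheory Filter Real Set
open scoped Topology ENNReal


lemma aux_J (σ A : ℝ) (hσ : 0 < σ) (hA : 0 < A) :
    IntegrableOn (fun x => (3 + 2*σ*x) / (x * (1+σ*x)^2)) (Ioi A) volume ∧
    ∫ x in Ioi A, (3 + 2*σ*x) / (x * (1+σ*x)^2) =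
      -(3 * Real.log (σ*A/(1+σ*A)) + (1+σ*A)⁻¹) := by
  set G : ℝ → ℝ := fun x => 3 * Real.log (σ*x/(1+σ*x)) + (1+σ*x)⁻¹ with hG
  have hderiv : ∀ x ∈ Ici A, HasDerivAt G ((3 + 2*σ*x) / (x * (1+σ*x)^2)) x := by
    intro x hx
    have hx0 : 0 < x := lt_of_lt_of_le hA hx
    have hd : (0:ℝ) < 1 + σ*x := by positivity
    have h1 : HasDerivAt (fun x : ℝ => σ*x/(1+σ*x))
        ((σ * (1+σ*x) - (σ*x) * σ) / (1+σ*x)^2) x := by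
      simpa [Pi.div_def] using ((hasDerivAt_id x).const_mul σ).div
        (((hasDerivAt_id x).const_mul σ).const_add 1) hd.ne'
    have h2 : HasDerivAt (fun x : ℝ => Real.log (σ*x/(1+σ*x)))
        (((σ * (1+σ*x) - (σ*x) * σ) / (1+σ*x)^2) / (σ*x/(1+σ*x))) x :=
      h1.log (by positivity)
    have h3 : HasDerivAt (fun x : ℝ => (1+σ*x)⁻¹)
        (-(σ) / (1+σ*x)^2) x := by
      simpa [Pi.inv_def] using (((hasDerivAt_id x).const_mul σ).const_add 1).inv hd.ne'
    have := (h2.const_mul 3).add h3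
    refine this.congr_deriv ?_
    field_simp
    ring
  have g'pos : ∀ x ∈ Ioi A, 0 ≤ (3 + 2*σ*x) / (x * (1+σ*x)^2) := by
    intro x hx
    have hx0 : 0 < x := lt_trans hA hx
    positivity
  have hGtop : Tendsto G atTop (𝓝 0) := by
    have h1 : Tendsto (fun x : ℝ => 1 + σ*x) atTop atTop :=
      tendsto_atTop_add_const_left _ 1 (Tendsto.const_mul_atTop hσ tendsto_id)
    have h2 : Tendsto (fun x : ℝ => (1+σ*x)⁻¹) atTop (𝓝 0) := h1.inv_tendsto_atTop
    have h3 : Tendsto (fun x : ℝ => σ*x/(1+σ*x)) atTop (𝓝 1) := by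
      have : Tendsto (fun x : ℝ => 1 - (1+σ*x)⁻¹) atTop (𝓝 (1 - 0)) :=
        tendsto_const_nhds.sub h2
      rw [sub_zero] at this
      refine this.congr' ?_
      filter_upwards [eventually_gt_atTop 0] with x hx
      have hd : (0:ℝ) < 1 + σ*x := by positivity
      field_simp
      ring
    have h4 : Tendsto (fun x : ℝ => Real.log (σ*x/(1+σ*x))) atTop (𝓝 0) := by
      have := (Real.continuousAt_log one_ne_zero).tendsto.comp h3
      simpa [Function.comp_def] using this
    have := (h4.const_mul 3).add h2
    simpa using this
  constructor
  · exact integrableOn_Ioi_deriv_of_nonneg' hderiv g'pos hGtop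
  · rw [integral_Ioi_of_hasDerivAt_of_nonneg' hderiv g'pos hGtop]
    simp [hG]


lemma aux_ftc (σ b : ℝ) (hσ : 0 ≤ σ) (hb : 0 ≤ b) :
    ∫ t in (0:ℝ)..b, (3*t^2 + 2*σ*t^3) / (1+σ*t)^2 = b^3/(1+σ*b) := by
  have key : ∀ x ∈ uIcc (0:ℝ) b, HasDerivAt (fun x : ℝ => x^3/(1+σ*x))
      ((3*x^2 + 2*σ*x^3) / (1+σ*x)^2) x := by
    intro x hx
    rw [uIcc_of_le hb] at hx
    have hx0 : 0 ≤ x := hx.1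
    have hd : (0:ℝ) < 1 + σ*x := by positivity
    have h1 : HasDerivAt (fun x : ℝ => x^3/(1+σ*x))
        ((3*x^2*(1+σ*x) - x^3*σ) / (1+σ*x)^2) x := by
      simpa [Pi.div_def] using (hasDerivAt_pow 3 x).div
        (((hasDerivAt_id x).const_mul σ).const_add 1) hd.ne'
    convert h1 using 1
    field_simp
    ring
  have hint : IntervalIntegrable (fun t : ℝ => (3*t^2 + 2*σ*t^3) / (1+σ*t)^2)
      volume 0 b := by
    apply ContinuousOn.intervalIntegrable
    apply ContinuousOn.div
    · fun_prop
    · fun_prop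
    · intro x hx
      rw [uIcc_of_le hb] at hx
      have : (0:ℝ) < 1 + σ*x := by have := hx.1; positivity
      positivity
  have := intervalIntegral.integral_eq_sub_of_hasDerivAt key hint
  rw [this]
  norm_num

lemma aux_layer3 {Ω : Type*} [MeasurableSpace Ω] (μ : Measure Ω)
    (w : Ω → ℝ) (hw_meas : Measurable w) (hw_nonneg : ∀ ω, 0 ≤ w ω)
    (σ : ℝ) (hσ : 0 < σ) :
    ∫⁻ ω, ENNReal.ofReal ((w ω)^3 / (1 + σ * w ω)) ∂μ =
      ∫⁻ x in Ioi (0:ℝ), μ {ω | x < w ω} *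
        ENNReal.ofReal ((3*x^2 + 2*σ*x^3) / (1+σ*x)^2) := by
  have g_intble : ∀ t > (0:ℝ), IntervalIntegrable
      (fun t : ℝ => (3*t^2 + 2*σ*t^3) / (1+σ*t)^2) volume 0 t := by
    intro t ht
    apply ContinuousOn.intervalIntegrable
    apply ContinuousOn.div
    · fun_prop
    · fun_prop
    · intro x hx
      rw [uIcc_of_le ht.le] at hx
      have : (0:ℝ) < 1 + σ*x := by have := hx.1; positivity
      positivity
  have g_nn : ∀ᵐ t ∂(volume.restrict (Ioi (0:ℝ))),
      0 ≤ (3*t^2 + 2*σ*t^3) / (1+σ*t)^2 := by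
    filter_upwards [ae_restrict_mem measurableSet_Ioi] with t ht
    have ht0 : (0:ℝ) < t := ht
    positivity
  have := lintegral_comp_eq_lintegral_meas_lt_mul μ
    (ae_of_all μ hw_nonneg) hw_meas.aemeasurable g_intble g_nn
  rw [← this]
  apply lintegral_congr
  intro ω
  rw [aux_ftc σ (w ω) hσ.le (hw_nonneg ω)]

lemma aux_layer2 {Ω : Type*} [MeasurableSpace Ω] (μ : Measure Ω)
    (w : Ω → ℝ) (hw_meas : Measurable w) (hw_nonneg : ∀ ω, 0 ≤ w ω) :
    ∫⁻ ω, ENNReal.ofReal ((w ω)^2) ∂μ =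
      ∫⁻ x in Ioi (0:ℝ), μ {ω | x < w ω} * ENNReal.ofReal (2*x) := by
  have g_intble : ∀ t > (0:ℝ), IntervalIntegrable (fun t : ℝ => 2*t) volume 0 t :=
    fun t _ => (continuous_const.mul continuous_id).intervalIntegrable 0 t
  have g_nn : ∀ᵐ t ∂(volume.restrict (Ioi (0:ℝ))), 0 ≤ 2*t := by
    filter_upwards [ae_restrict_mem measurableSet_Ioi] with t ht
    have ht0 : (0:ℝ) < t := ht
    positivity
  have := lintegral_comp_eq_lintegral_meas_lt_mul μ
    (ae_of_all μ hw_nonneg) hw_meas.aemeasurable g_intble g_nn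
  rw [← this]
  apply lintegral_congr
  intro ω
  congr 1
  rw [intervalIntegral.integral_const_mul, integral_id]
  ring

lemma aux_int_decay (D M : ℝ) (hM : 0 < M) (hD : 0 ≤ D) :
    IntegrableOn (fun x : ℝ => D / x^3 * (2*x)) (Ioi M) volume ∧
    ∫⁻ x in Ioi M, ENNReal.ofReal (D / x^3 * (2*x)) ∂volume < ⊤ := by
  have hderiv : ∀ x ∈ Ici M, HasDerivAt (fun x : ℝ => -(2*D) * x⁻¹)
      (D / x^3 * (2*x)) x := by
    intro x hx
    have hx0 : 0 < x := lt_of_lt_of_le hM hx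
    have := (hasDerivAt_inv hx0.ne').const_mul (-(2*D))
    refine this.congr_deriv ?_
    field_simp
  have g'pos : ∀ x ∈ Ioi M, 0 ≤ D / x^3 * (2*x) := by
    intro x hx
    have hx0 : 0 < x := lt_trans hM hx
    positivity
  have htop : Tendsto (fun x : ℝ => -(2*D) * x⁻¹) atTop (𝓝 0) := by
    have := tendsto_inv_atTop_zero.const_mul (-(2*D))
    simpa using this
  have hint := integrableOn_Ioi_deriv_of_nonneg' hderiv g'pos htop
  refine ⟨hint, ?_⟩
  rw [← ofReal_integral_eq_lintegral_ofReal hint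
    (by filter_upwards [ae_restrict_mem measurableSet_Ioi] with x hx using g'pos x hx)]
  exact ENNReal.ofReal_lt_top

lemma aux_integrable {Ω : Type*} [MeasurableSpace Ω] (μ : Measure Ω)
    [IsProbabilityMeasure μ]
    (w : Ω → ℝ) (hw_meas : Measurable w) (hw_nonneg : ∀ ω, 0 ≤ w ω)
    (D M : ℝ) (hM : 0 < M) (hD : 0 ≤ D)
    (h : ∀ x : ℝ, M ≤ x → (μ {ω | x < w ω}).toReal ≤ D / x^3) :
    Integrable (fun ω => (w ω) ^ 2) μ := by
  refine ⟨(hw_meas.pow_const 2).aestronglyMeasurable, ?_⟩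
  rw [hasFiniteIntegral_iff_ofReal (ae_of_all μ fun ω => by positivity)]
  rw [aux_layer2 μ w hw_meas hw_nonneg]
  rw [← Ioc_union_Ioi_eq_Ioi hM.le, lintegral_union measurableSet_Ioi Ioc_disjoint_Ioi_same]
  have piece1 : ∫⁻ x in Ioc (0:ℝ) M, μ {ω | x < w ω} * ENNReal.ofReal (2*x) < ⊤ := by
    calc ∫⁻ x in Ioc (0:ℝ) M, μ {ω | x < w ω} * ENNReal.ofReal (2*x)
        ≤ ∫⁻ _ in Ioc (0:ℝ) M, ENNReal.ofReal (2*M) := by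
          refine setLIntegral_mono' measurableSet_Ioc fun x hx => ?_
          calc μ {ω | x < w ω} * ENNReal.ofReal (2*x)
              ≤ 1 * ENNReal.ofReal (2*M) := by
                exact mul_le_mul' prob_le_one
                  (ENNReal.ofReal_le_ofReal (by nlinarith [hx.2]))
            _ = ENNReal.ofReal (2*M) := one_mul _
      _ = ENNReal.ofReal (2*M) * volume (Ioc (0:ℝ) M) := setLIntegral_const _ _
      _ < ⊤ := by
          rw [Real.volume_Ioc]
          exact ENNReal.mul_lt_top ENNReal.ofReal_lt_top ENNReal.ofReal_lt_top
  have piece2 : ∫⁻ x in Ioi M, μ {ω | x < w ω} * ENNReal.ofReal (2*x) < ⊤ := by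
    refine lt_of_le_of_lt ?_ (aux_int_decay D M hM hD).2
    refine setLIntegral_mono' measurableSet_Ioi fun x hx => ?_
    have hx0 : 0 < x := lt_trans hM hx
    have h1 : μ {ω | x < w ω} ≤ ENNReal.ofReal (D / x^3) := by
      rw [← ENNReal.ofReal_toReal (measure_ne_top μ _)]
      exact ENNReal.ofReal_le_ofReal (h x (le_of_lt hx))
    calc μ {ω | x < w ω} * ENNReal.ofReal (2*x)
        ≤ ENNReal.ofReal (D / x^3) * ENNReal.ofReal (2*x) :=
          mul_le_mul_left h1 _
      _ = ENNReal.ofReal (D / x^3 * (2*x)) := by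
          rw [← ENNReal.ofReal_mul (by positivity)]
  exact ENNReal.add_lt_top.mpr ⟨piece1, piece2⟩

lemma aux_bounds {Ω : Type*} [MeasurableSpace Ω] (μ : Measure Ω) [IsProbabilityMeasure μ]
    (w : Ω → ℝ) (C δ σ A : ℝ) (hσ0 : 0 < σ) (hσ1 : σ < 1) (hA : 1 ≤ A)
    (hδ0 : 0 < δ) (hδC : δ ≤ C)
    (htail : ∀ x : ℝ, A ≤ x → |x^3 * (μ {ω | x < w ω}).toReal - C| ≤ δ)
    (hJ : 0 ≤ -(3 * Real.log (σ*A/(1+σ*A)) + (1+σ*A)⁻¹)) :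
    (∫⁻ x in Ioi (0:ℝ), μ {ω | x < w ω} *
        ENNReal.ofReal ((3*x^2+2*σ*x^3)/(1+σ*x)^2)) ≠ ⊤ ∧
    (C-δ) * -(3 * Real.log (σ*A/(1+σ*A)) + (1+σ*A)⁻¹) ≤
      (∫⁻ x in Ioi (0:ℝ), μ {ω | x < w ω} *
        ENNReal.ofReal ((3*x^2+2*σ*x^3)/(1+σ*x)^2)).toReal ∧
    (∫⁻ x in Ioi (0:ℝ), μ {ω | x < w ω} *
        ENNReal.ofReal ((3*x^2+2*σ*x^3)/(1+σ*x)^2)).toReal ≤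
      (3*A^2+2*A^3)*A + (C+δ) * -(3 * Real.log (σ*A/(1+σ*A)) + (1+σ*A)⁻¹) := by
  have hA0 : (0:ℝ) < A := lt_of_lt_of_le one_pos hA
  set J : ℝ := -(3 * Real.log (σ*A/(1+σ*A)) + (1+σ*A)⁻¹) with hJdef
  set B : ℝ := (3*A^2+2*A^3)*A with hBdef
  have hB0 : 0 ≤ B := by positivity
  set g : ℝ → ℝ := fun x => (3 + 2*σ*x) / (x * (1+σ*x)^2) with hgdef
  set L : ℝ≥0∞ := ∫⁻ x in Ioi (0:ℝ), μ {ω | x < w ω} *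
      ENNReal.ofReal ((3*x^2+2*σ*x^3)/(1+σ*x)^2) with hLdef
  obtain ⟨hgint, hgval⟩ := aux_J σ A hσ0 hA0
  -- the two explicit lintegrals over Ioi A
  have hup : ∫⁻ x in Ioi A, ENNReal.ofReal ((C+δ) * g x) ∂volume
      = ENNReal.ofReal ((C+δ) * J) := by
    rw [← ofReal_integral_eq_lintegral_ofReal (hgint.const_mul (C+δ))
      (by filter_upwards [ae_restrict_mem measurableSet_Ioi] with x hx
          have hx0 : 0 < x := lt_trans hA0 hx
          have hgx : 0 ≤ (3 + 2*σ*x) / (x * (1+σ*x)^2) := by positivity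
          exact mul_nonneg (by linarith) hgx)]
    rw [MeasureTheory.integral_const_mul, hgval]
  have hlo : ∫⁻ x in Ioi A, ENNReal.ofReal ((C-δ) * g x) ∂volume
      = ENNReal.ofReal ((C-δ) * J) := by
    rw [← ofReal_integral_eq_lintegral_ofReal (hgint.const_mul (C-δ))
      (by filter_upwards [ae_restrict_mem measurableSet_Ioi] with x hx
          have hx0 : 0 < x := lt_trans hA0 hx
          have hgx : 0 ≤ (3 + 2*σ*x) / (x * (1+σ*x)^2) := by positivity
          exact mul_nonneg (by linarith) hgx)]
    rw [MeasureTheory.integral_const_mul, hgval]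
  -- pointwise facts on Ioi A
  have hFub : ∀ x : ℝ, x ∈ Ioi A → μ {ω | x < w ω} *
      ENNReal.ofReal ((3*x^2+2*σ*x^3)/(1+σ*x)^2) ≤ ENNReal.ofReal ((C+δ) * g x) := by
    intro x hx
    have hx0 : 0 < x := lt_trans hA0 hx
    have hd : (0:ℝ) < 1 + σ*x := by positivity
    have hF := htail x (le_of_lt hx)
    rw [abs_le] at hF
    have hFle : (μ {ω | x < w ω}).toReal ≤ (C+δ)/x^3 := by
      rw [le_div_iff₀ (by positivity)]
      nlinarith [hF.2]
    calc μ {ω | x < w ω} * ENNReal.ofReal ((3*x^2+2*σ*x^3)/(1+σ*x)^2)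
        ≤ ENNReal.ofReal ((C+δ)/x^3) * ENNReal.ofReal ((3*x^2+2*σ*x^3)/(1+σ*x)^2) := by
          refine mul_le_mul_left ?_ _
          rw [← ENNReal.ofReal_toReal (measure_ne_top μ _)]
          exact ENNReal.ofReal_le_ofReal hFle
      _ = ENNReal.ofReal ((C+δ)/x^3 * ((3*x^2+2*σ*x^3)/(1+σ*x)^2)) := by
          rw [← ENNReal.ofReal_mul (div_nonneg (by linarith) (by positivity))]
      _ = ENNReal.ofReal ((C+δ) * g x) := by
          congr 1
          rw [hgdef]
          field_simp
  have hFlb : ∀ x : ℝ, x ∈ Ioi A → ENNReal.ofReal ((C-δ) * g x) ≤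
      μ {ω | x < w ω} * ENNReal.ofReal ((3*x^2+2*σ*x^3)/(1+σ*x)^2) := by
    intro x hx
    have hx0 : 0 < x := lt_trans hA0 hx
    have hd : (0:ℝ) < 1 + σ*x := by positivity
    have hF := htail x (le_of_lt hx)
    rw [abs_le] at hF
    have hFge : (C-δ)/x^3 ≤ (μ {ω | x < w ω}).toReal := by
      rw [div_le_iff₀ (by positivity)]
      nlinarith [hF.1]
    calc ENNReal.ofReal ((C-δ) * g x)
        = ENNReal.ofReal ((C-δ)/x^3) * ENNReal.ofReal ((3*x^2+2*σ*x^3)/(1+σ*x)^2) := by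
          rw [← ENNReal.ofReal_mul (div_nonneg (by linarith) (by positivity))]
          congr 1
          rw [hgdef]
          field_simp
      _ ≤ μ {ω | x < w ω} * ENNReal.ofReal ((3*x^2+2*σ*x^3)/(1+σ*x)^2) := by
          refine mul_le_mul_left ?_ _
          rw [← ENNReal.ofReal_toReal (measure_ne_top μ _)]
          exact ENNReal.ofReal_le_ofReal hFge
  -- split L
  have hsplit : L = (∫⁻ x in Ioc (0:ℝ) A, μ {ω | x < w ω} *
      ENNReal.ofReal ((3*x^2+2*σ*x^3)/(1+σ*x)^2)) +
      ∫⁻ x in Ioi A, μ {ω | x < w ω} *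
      ENNReal.ofReal ((3*x^2+2*σ*x^3)/(1+σ*x)^2) := by
    rw [hLdef, ← Ioc_union_Ioi_eq_Ioi hA0.le,
      lintegral_union measurableSet_Ioi Ioc_disjoint_Ioi_same]
  have hpiece1 : (∫⁻ x in Ioc (0:ℝ) A, μ {ω | x < w ω} *
      ENNReal.ofReal ((3*x^2+2*σ*x^3)/(1+σ*x)^2)) ≤ ENNReal.ofReal B := by
    calc (∫⁻ x in Ioc (0:ℝ) A, μ {ω | x < w ω} *
        ENNReal.ofReal ((3*x^2+2*σ*x^3)/(1+σ*x)^2))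
        ≤ ∫⁻ _ in Ioc (0:ℝ) A, ENNReal.ofReal (3*A^2+2*A^3) := by
          refine setLIntegral_mono' measurableSet_Ioc fun x hx => ?_
          have hx0 : 0 < x := hx.1
          have hxA : x ≤ A := hx.2
          have hd : (1:ℝ) ≤ (1+σ*x)^2 := by nlinarith [mul_nonneg hσ0.le hx0.le]
          calc μ {ω | x < w ω} * ENNReal.ofReal ((3*x^2+2*σ*x^3)/(1+σ*x)^2)
              ≤ 1 * ENNReal.ofReal (3*A^2+2*A^3) := by
                refine mul_le_mul' prob_le_one (ENNReal.ofReal_le_ofReal ?_)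
                have h1 : (3*x^2+2*σ*x^3)/(1+σ*x)^2 ≤ 3*x^2+2*σ*x^3 :=
                  div_le_self (by positivity) hd
                have e2 : x^2 ≤ A^2 := pow_le_pow_left₀ hx0.le hxA 2
                have e3 : x^3 ≤ A^3 := pow_le_pow_left₀ hx0.le hxA 3
                have hσx : σ*x^3 ≤ A^3 :=
                  le_trans (mul_le_of_le_one_left (by positivity) hσ1.le) e3
                linarith
            _ = ENNReal.ofReal (3*A^2+2*A^3) := one_mul _
      _ = ENNReal.ofReal (3*A^2+2*A^3) * volume (Ioc (0:ℝ) A) := setLIntegral_const _ _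
      _ = ENNReal.ofReal B := by
          rw [Real.volume_Ioc, sub_zero, ← ENNReal.ofReal_mul (by positivity), hBdef]
  have hupper : L ≤ ENNReal.ofReal (B + (C+δ)*J) := by
    rw [hsplit, ENNReal.ofReal_add hB0 (mul_nonneg (by linarith) hJ)]
    exact add_le_add hpiece1
      (le_trans (setLIntegral_mono' measurableSet_Ioi hFub) (le_of_eq hup))
  have hLne : L ≠ ⊤ := ne_top_of_le_ne_top ENNReal.ofReal_ne_top hupper
  refine ⟨hLne, ?_, ?_⟩
  · have hlow : ENNReal.ofReal ((C-δ)*J) ≤ L := by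
      calc ENNReal.ofReal ((C-δ)*J) = ∫⁻ x in Ioi A, ENNReal.ofReal ((C-δ) * g x) ∂volume :=
            hlo.symm
        _ ≤ ∫⁻ x in Ioi A, μ {ω | x < w ω} *
            ENNReal.ofReal ((3*x^2+2*σ*x^3)/(1+σ*x)^2) :=
            setLIntegral_mono' measurableSet_Ioi hFlb
        _ ≤ L := by
            rw [hsplit]
            exact le_add_self
    exact (ENNReal.ofReal_le_iff_le_toReal hLne).mp hlow
  · exact ENNReal.toReal_le_of_le_ofReal
      (add_nonneg hB0 (mul_nonneg (by linarith) hJ)) hupper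

lemma aux_rel {Ω : Type*} [MeasurableSpace Ω] (μ : Measure Ω) [IsProbabilityMeasure μ]
    (w : Ω → ℝ) (hw_meas : Measurable w) (hw_nonneg : ∀ ω, 0 ≤ w ω)
    (hInt2 : Integrable (fun ω => (w ω)^2) μ) (σ : ℝ) (hσ : 0 < σ) :
    (∫ ω, (w ω)^2 / (1 + σ * w ω) ∂μ) - ∫ ω, (w ω)^2 ∂μ =
      -σ * (∫⁻ ω, ENNReal.ofReal ((w ω)^3 / (1 + σ * w ω)) ∂μ).toReal := by
  have hd : ∀ ω, (0:ℝ) < 1 + σ * w ω := fun ω => by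
    have := hw_nonneg ω; positivity
  have hm1 : AEStronglyMeasurable (fun ω => (w ω)^2 / (1 + σ * w ω)) μ :=
    ((hw_meas.pow_const 2).div
      (measurable_const.add (measurable_const.mul hw_meas))).aestronglyMeasurable
  have h1 : Integrable (fun ω => (w ω)^2 / (1 + σ * w ω)) μ := by
    refine hInt2.mono' hm1 (ae_of_all μ fun ω => ?_)
    rw [Real.norm_eq_abs, abs_of_nonneg (by have := hw_nonneg ω; positivity)]
    exact div_le_self (by positivity) (by have := hw_nonneg ω; nlinarith)
  have key : ∀ ω, (w ω)^2 / (1 + σ * w ω) - (w ω)^2 =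
      -σ * ((w ω)^3 / (1 + σ * w ω)) := by
    intro ω
    have := (hd ω).ne'
    rw [div_sub' this]
    field_simp
    ring
  have h3 : Integrable (fun ω => (w ω)^3 / (1 + σ * w ω)) μ := by
    refine ((h1.sub hInt2).const_mul (-1/σ)).congr (ae_of_all μ fun ω => ?_)
    show -1/σ * ((w ω)^2 / (1 + σ * w ω) - (w ω)^2) = (w ω)^3 / (1 + σ * w ω)
    rw [key ω]
    field_simp
  have nn : 0 ≤ᵐ[μ] fun ω => (w ω)^3 / (1 + σ * w ω) :=
    ae_of_all μ fun ω => by have := hw_nonneg ω; positivity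
  rw [← integral_eq_lintegral_of_nonneg_ae nn h3.aestronglyMeasurable]
  rw [← MeasureTheory.integral_const_mul, ← integral_sub h1 hInt2]
  exact integral_congr_ae (ae_of_all μ fun ω => key ω)

/-- Let `w ≥ 0` with tail `P(w > x) ~ C x^{-3}` for some `C > 0`
(tail exponent `α = 4`). Then `E[w²] < ∞` and
`(E[w²/(1+σw)] − E[w²])/(σ log σ) → 3C` as `σ → 0⁺`. -/
theorem tail_asymptotics_alpha_four
    {Ω : Type*} [MeasurableSpace Ω] (μ : Measure Ω) [IsProbabilityMeasure μ]
    (w : Ω → ℝ) (hw_meas : Measurable w) (hw_nonneg : ∀ ω, 0 ≤ w ω)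
    (C : ℝ) (hC : 0 < C)
    (htail : Tendsto (fun x : ℝ => x ^ 3 * (μ {ω | x < w ω}).toReal)
      atTop (𝓝 C)) :
    Integrable (fun ω => (w ω) ^ 2) μ ∧
    Tendsto (fun σ : ℝ =>
        ((∫ ω, (w ω) ^ 2 / (1 + σ * w ω) ∂μ) - ∫ ω, (w ω) ^ 2 ∂μ) /
          (σ * Real.log σ))
      (𝓝[>] 0) (𝓝 (3 * C)) := by
  obtain ⟨N₀, hN₀⟩ := Metric.tendsto_atTop.mp htail 1 one_pos
  have hInt2 : Integrable (fun ω => (w ω) ^ 2) μ := by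
    refine aux_integrable μ w hw_meas hw_nonneg (C+1) (max N₀ 1)
      (lt_of_lt_of_le one_pos (le_max_right _ _)) (by linarith) ?_
    intro x hx
    have hx1 : (1:ℝ) ≤ x := le_trans (le_max_right _ _) hx
    have hx0 : (0:ℝ) < x := lt_of_lt_of_le one_pos hx1
    have hd := hN₀ x (le_trans (le_max_left _ _) hx)
    rw [Real.dist_eq, abs_lt] at hd
    rw [le_div_iff₀ (by positivity)]
    nlinarith [hd.2]
  refine ⟨hInt2, ?_⟩
  set Lr : ℝ → ℝ := fun σ => (∫⁻ x in Ioi (0:ℝ), μ {ω | x < w ω} *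
      ENNReal.ofReal ((3*x^2+2*σ*x^3)/(1+σ*x)^2)).toReal with hLrdef
  have heq : ∀ᶠ σ in 𝓝[>] (0:ℝ),
      ((∫ ω, (w ω) ^ 2 / (1 + σ * w ω) ∂μ) - ∫ ω, (w ω) ^ 2 ∂μ) /
          (σ * Real.log σ) = Lr σ / (- Real.log σ) := by
    filter_upwards [Ioo_mem_nhdsGT one_pos] with σ hσ
    obtain ⟨hσ0, hσ1⟩ := hσ
    rw [aux_rel μ w hw_meas hw_nonneg hInt2 σ hσ0,
      aux_layer3 μ w hw_meas hw_nonneg σ hσ0]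
    show -σ * Lr σ / (σ * Real.log σ) = Lr σ / (- Real.log σ)
    have h1 : σ ≠ 0 := ne_of_gt hσ0
    rw [div_neg, neg_mul, neg_div, mul_div_mul_left _ _ h1]
  have main : Tendsto (fun σ : ℝ => Lr σ / (-Real.log σ)) (𝓝[>] (0:ℝ))
      (𝓝 (3*C)) := by
    rw [Metric.tendsto_nhds]
    intro ε εpos
    set δ := min C (ε/12) with hδdef
    have hδ0 : 0 < δ := lt_min hC (by positivity)
    have hδC : δ ≤ C := min_le_left _ _
    have hδε : δ ≤ ε/12 := min_le_right _ _
    obtain ⟨N, hN⟩ := Metric.tendsto_atTop.mp htail δ hδ0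
    set A := max N 1 with hAdef
    have hA1 : (1:ℝ) ≤ A := le_max_right _ _
    have hA0 : (0:ℝ) < A := lt_of_lt_of_le one_pos hA1
    have htailA : ∀ x : ℝ, A ≤ x → |x^3 * (μ {ω | x < w ω}).toReal - C| ≤ δ := by
      intro x hx
      have := hN x (le_trans (le_max_left _ _) hx)
      rw [Real.dist_eq] at this
      exact this.le
    set Jf : ℝ → ℝ := fun σ => -(3 * Real.log (σ*A/(1+σ*A)) + (1+σ*A)⁻¹) with hJfdef
    set B : ℝ := (3*A^2+2*A^3)*A with hBdef
    set c : ℝ → ℝ := fun σ => 3*Real.log (1+σ*A) - 3*Real.log A - (1+σ*A)⁻¹ with hcdef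
    have hneg : Tendsto (fun σ : ℝ => -Real.log σ) (𝓝[>] (0:ℝ)) atTop :=
      tendsto_neg_atBot_atTop.comp Real.tendsto_log_nhdsGT_zero
    have hJexp : ∀ σ : ℝ, 0 < σ → Jf σ = 3*(-Real.log σ) + c σ := by
      intro σ hσ0
      have hd : (0:ℝ) < 1 + σ*A := by positivity
      show -(3 * Real.log (σ*A/(1+σ*A)) + (1+σ*A)⁻¹) =
        3*(-Real.log σ) + (3*Real.log (1+σ*A) - 3*Real.log A - (1+σ*A)⁻¹)
      rw [Real.log_div (by positivity) hd.ne', Real.log_mul hσ0.ne' hA0.ne']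
      ring
    have hccont : Tendsto c (𝓝[>] (0:ℝ)) (𝓝 (-3*Real.log A - 1)) := by
      have h1 : ContinuousAt c 0 := by
        rw [hcdef]
        refine ContinuousAt.sub (ContinuousAt.sub ?_ continuousAt_const) ?_
        · exact continuousAt_const.mul (ContinuousAt.log (by fun_prop) (by norm_num))
        · exact ContinuousAt.inv₀ (by fun_prop) (by norm_num)
      have h2 : c 0 = -3*Real.log A - 1 := by
        show 3*Real.log (1+0*A) - 3*Real.log A - (1+0*A)⁻¹ = -3*Real.log A - 1
        norm_num
      rw [← h2]
      exact h1.tendsto.mono_left nhdsWithin_le_nhds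
    have hc0 : Tendsto (fun σ => c σ / (-Real.log σ)) (𝓝[>] (0:ℝ)) (𝓝 0) :=
      hccont.div_atTop hneg
    have hJdiv : Tendsto (fun σ => Jf σ / (-Real.log σ)) (𝓝[>] (0:ℝ)) (𝓝 3) := by
      have h3 : Tendsto (fun σ : ℝ => 3 + c σ / (-Real.log σ)) (𝓝[>] (0:ℝ)) (𝓝 3) := by
        have h4 : Tendsto (fun _ : ℝ => (3:ℝ)) (𝓝[>] (0:ℝ)) (𝓝 3) :=
          tendsto_const_nhds
        simpa using h4.add hc0
      refine h3.congr' ?_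
      filter_upwards [Ioo_mem_nhdsGT one_pos] with σ hσ
      have hσ0 := hσ.1
      have hl : 0 < -Real.log σ := neg_pos.mpr (Real.log_neg hσ0 hσ.2)
      rw [hJexp σ hσ0, add_div, mul_div_assoc, div_self hl.ne', mul_one]
    have hJtop : Tendsto Jf (𝓝[>] (0:ℝ)) atTop := by
      have h1 : Tendsto (fun σ : ℝ => c σ + 3*(-Real.log σ)) (𝓝[>] (0:ℝ)) atTop :=
        hccont.add_atTop (hneg.const_mul_atTop (by norm_num : (0:ℝ) < 3))
      refine h1.congr' ?_
      filter_upwards [self_mem_nhdsWithin] with σ hσ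
      rw [hJexp σ hσ]
      ring
    have hJ0 : ∀ᶠ σ in 𝓝[>] (0:ℝ), 0 ≤ Jf σ := hJtop.eventually_ge_atTop 0
    have hBlim : Tendsto (fun σ : ℝ => B / (-Real.log σ)) (𝓝[>] (0:ℝ)) (𝓝 0) :=
      tendsto_const_nhds.div_atTop hneg
    have hUb : Tendsto (fun σ : ℝ => B/(-Real.log σ) + (C+δ)*(Jf σ/(-Real.log σ)))
        (𝓝[>] (0:ℝ)) (𝓝 (0 + (C+δ)*3)) := hBlim.add (hJdiv.const_mul (C+δ))
    have hLb : Tendsto (fun σ : ℝ => (C-δ)*(Jf σ/(-Real.log σ)))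
        (𝓝[>] (0:ℝ)) (𝓝 ((C-δ)*3)) := hJdiv.const_mul (C-δ)
    have hUev := Metric.tendsto_nhds.mp hUb (ε/4) (by positivity)
    have hLev := Metric.tendsto_nhds.mp hLb (ε/4) (by positivity)
    filter_upwards [hJ0, hUev, hLev, Ioo_mem_nhdsGT one_pos]
      with σ hJ0σ hUσ hLσ hσIoo
    obtain ⟨hσ0, hσ1⟩ := hσIoo
    have hl : 0 < -Real.log σ := neg_pos.mpr (Real.log_neg hσ0 hσ1)
    obtain ⟨hne, hlow, hupp⟩ :=
      aux_bounds μ w C δ σ A hσ0 hσ1 hA1 hδ0 hδC htailA hJ0σ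
    have hlow' : (C-δ) * Jf σ ≤ Lr σ := hlow
    have hupp' : Lr σ ≤ B + (C+δ) * Jf σ := hupp
    have hX1 : Lr σ/(-Real.log σ) ≤ B/(-Real.log σ) + (C+δ)*(Jf σ/(-Real.log σ)) := by
      calc Lr σ/(-Real.log σ) ≤ (B + (C+δ)*Jf σ)/(-Real.log σ) := by gcongr
        _ = B/(-Real.log σ) + (C+δ)*(Jf σ/(-Real.log σ)) := by
            ring
    have hX2 : (C-δ)*(Jf σ/(-Real.log σ)) ≤ Lr σ/(-Real.log σ) := by
      calc (C-δ)*(Jf σ/(-Real.log σ)) = ((C-δ)*Jf σ)/(-Real.log σ) := by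
            ring
        _ ≤ Lr σ/(-Real.log σ) := by gcongr
    rw [Real.dist_eq, abs_lt]
    rw [Real.dist_eq, abs_lt] at hUσ hLσ
    constructor
    · have := hLσ.2
      nlinarith [hX2, hδε, hδC]
    · have := hUσ.1
      nlinarith [hX1, hδε, hδC]
  have heq' : (fun σ : ℝ => Lr σ / (-Real.log σ)) =ᶠ[𝓝[>] (0:ℝ)]
      (fun σ : ℝ => ((∫ ω, (w ω) ^ 2 / (1 + σ * w ω) ∂μ) - ∫ ω, (w ω) ^ 2 ∂μ) /
        (σ * Real.log σ)) := by
    filter_upwards [heq] with σ h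
    exact h.symm
  exact main.congr' heq'
end
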